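/- arXiv:1408.1964 — 8 statements merged into one kernel-verified Lean document; each statement's English description precedes it below -/
import Mathlib

section
/- Let T be a finite rooted tree and w a nonnegative weight function on its nodes with total weight 1. Then either there exists a path P from the root (following the descendance order) whose nodes have total weight at least 1/4, or there exist two sets A and B of nodes, each of total weight at least 1/4, such that no node of A is an ancestor or descendant of any node of B. -/
open Finset

/-- A finite rooted tree is modelled by a partial order (the
ancestor/descendance order) on a finite nonempty type, in which the root `r` is the
least element and the set of ancestors of every node is a chain.  Given a nonnegative
weight function of total weight `1`, either some path from the root (a chain of nodes
containing the root) has weight at least `1/4`, or there are two unrelated sets of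
nodes, each of weight at least `1/4`. -/
theorem stmt0 {V : Type*} [Fintype V] [DecidableEq V] [PartialOrder V]
    (r : V) (hroot : ∀ v : V, r ≤ v)
    (htree : ∀ v : V, IsChain (· ≤ ·) {u : V | u ≤ v})
    (w : V → ℝ) (hw : ∀ v, 0 ≤ w v) (hw1 : ∑ v, w v = 1) :
    (∃ P : Finset V, r ∈ P ∧ IsChain (· ≤ ·) (P : Set V) ∧ 1 / 4 ≤ ∑ v ∈ P, w v) ∨
    (∃ A B : Finset V,
      (∀ a ∈ A, ∀ b ∈ B, ¬ a ≤ b ∧ ¬ b ≤ a) ∧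
      1 / 4 ≤ ∑ v ∈ A, w v ∧ 1 / 4 ≤ ∑ v ∈ B, w v) := by
  classical
  set W : V → ℝ := fun v => ∑ u ∈ univ.filter (fun u => v ≤ u), w u with hWdef
  have hWr : W r = 1 := by
    rw [hWdef]
    simp only
    rw [filter_true_of_mem (fun u _ => hroot u), hw1]
  obtain ⟨v, hvS, hvmax⟩ : ∃ m ∈ univ.filter (fun v => (1:ℝ)/2 < W v),
      ∀ x ∈ univ.filter (fun v => (1:ℝ)/2 < W v), ¬ m < x := by
    obtain ⟨m, hm⟩ := Finset.exists_maximal (s := univ.filter (fun v => (1:ℝ)/2 < W v))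
      ⟨r, mem_filter.2 ⟨mem_univ r, by rw [hWr]; norm_num⟩⟩
    exact ⟨m, hm.1, fun x hx hlt => lt_irrefl _ (hlt.trans_le (hm.2 hx hlt.le))⟩
  rw [mem_filter] at hvS
  have hWv : (1:ℝ)/2 < W v := hvS.2
  have hvmax' : ∀ x, v < x → W x ≤ 1/2 := by
    intro x hx
    by_contra h
    exact hvmax x (mem_filter.2 ⟨mem_univ _, lt_of_not_ge h⟩) hx
  set C : Finset V := univ.filter (fun x => x ≤ v) with hCdef
  set D : Finset V := univ.filter (fun x => v < x) with hDdef
  set U : Finset V := univ.filter (fun x => ¬ x ≤ v ∧ ¬ v ≤ x) with hUdef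
  -- split of the total weight
  have hsplit : ∑ x ∈ C, w x + ∑ x ∈ D, w x + ∑ x ∈ U, w x = 1 := by
    have e1 := Finset.sum_filter_add_sum_filter_not univ (fun x => x ≤ v) w
    have e2 := Finset.sum_filter_add_sum_filter_not
      (univ.filter (fun x => ¬ x ≤ v)) (fun x => v ≤ x) w
    rw [filter_filter, filter_filter] at e2
    have eD : univ.filter (fun x => ¬x ≤ v ∧ v ≤ x) = D := by
      rw [hDdef]
      apply filter_congr
      intro x _
      rw [lt_iff_le_not_ge]
      tauto
    have eU : univ.filter (fun x => ¬x ≤ v ∧ ¬ v ≤ x) = U := rfl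
    rw [eD, eU] at e2
    rw [← hw1]
    rw [← e1, ← e2]
    ring
  have hvD : v ∉ D := by simp [hDdef]
  have hWvD : W v = w v + ∑ x ∈ D, w x := by
    have : univ.filter (fun x => v ≤ x) = insert v D := by
      ext x
      simp only [mem_filter, mem_univ, true_and, mem_insert, hDdef]
      constructor
      · intro h
        rcases lt_or_eq_of_le h with h' | h'
        · exact Or.inr h'
        · exact Or.inl h'.symm
      · rintro (rfl | h)
        · exact le_rfl
        · exact le_of_lt h
    rw [hWdef]
    simp only
    rw [this, sum_insert hvD]
  -- Case 1 : the chain below v is heavy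
  by_cases hC4 : (1:ℝ)/4 ≤ ∑ x ∈ C, w x
  · left
    refine ⟨C, ?_, ?_, hC4⟩
    · exact mem_filter.2 ⟨mem_univ _, hroot v⟩
    · have : (↑C : Set V) = {u | u ≤ v} := by
        ext x; simp [hCdef]
      rw [this]
      exact htree v
  push_neg at hC4
  have hwv : w v < 1/4 := by
    have : w v ≤ ∑ x ∈ C, w x :=
      Finset.single_le_sum (fun i _ => hw i) (mem_filter.2 ⟨mem_univ _, le_rfl⟩)
    linarith
  have hD4 : (1:ℝ)/4 < ∑ x ∈ D, w x := by linarith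
  -- elements above v are unrelated to elements of U
  have hrelU : ∀ a, v < a → ∀ b ∈ U, ¬ a ≤ b ∧ ¬ b ≤ a := by
    intro a hva b hb
    rw [mem_filter] at hb
    obtain ⟨-, hb1, hb2⟩ := hb
    constructor
    · intro h
      exact hb2 ((le_of_lt hva).trans h)
    · intro h
      rcases eq_or_ne b v with rfl | hne
      · exact hb1 le_rfl
      · rcases htree a (show b ∈ {u | u ≤ a} from h)
          (show v ∈ {u | u ≤ a} from le_of_lt hva) hne with h' | h'
        · exact hb1 h'
        · exact hb2 h'
  -- Case 2a : U is heavy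
  by_cases hU4 : (1:ℝ)/4 ≤ ∑ x ∈ U, w x
  · right
    refine ⟨U, D, ?_, hU4, le_of_lt hD4⟩
    intro a ha b hb
    have hvb : v < b := (mem_filter.1 hb).2
    obtain ⟨h1, h2⟩ := hrelU b hvb a ha
    exact ⟨h2, h1⟩
  push_neg at hU4
  have hD2 : (1:ℝ)/2 < ∑ x ∈ D, w x := by linarith
  -- Case 2b : split D into child subtrees
  have hminex : ∀ x : V, ∃ m : V,
      v < x → (v < m ∧ m ≤ x) ∧ ∀ y, v < y → y ≤ x → m ≤ y := by
    intro x
    by_cases hx : v < x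
    · obtain ⟨m, hm, hmmin⟩ : ∃ m ∈ univ.filter (fun y => v < y ∧ y ≤ x),
          ∀ y ∈ univ.filter (fun y => v < y ∧ y ≤ x), ¬ y < m := by
        obtain ⟨m, hm⟩ := Finset.exists_minimal (s := univ.filter (fun y => v < y ∧ y ≤ x))
          ⟨x, mem_filter.2 ⟨mem_univ _, hx, le_rfl⟩⟩
        exact ⟨m, hm.1, fun y hy hlt => lt_irrefl _ (hlt.trans_le (hm.2 hy hlt.le))⟩
      rw [mem_filter] at hm
      refine ⟨m, fun _ => ⟨hm.2, ?_⟩⟩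
      intro y hy1 hy2
      rcases eq_or_ne y m with rfl | hne
      · exact le_rfl
      · rcases htree x (show y ∈ {u | u ≤ x} from hy2)
          (show m ∈ {u | u ≤ x} from hm.2.2) hne with h | h
        · exact absurd (lt_of_le_of_ne h hne)
            (hmmin y (mem_filter.2 ⟨mem_univ _, hy1, hy2⟩))
        · exact h
    · exact ⟨x, fun h => absurd h hx⟩
  choose ch hch using hminex
  have hcheq : ∀ a, v < a → ∀ b, v < b → a ≤ b → ch a = ch b := by
    intro a ha b hb hab
    have h1 := hch a ha
    have h2 := hch b hb
    have hba : ch b ≤ a := h2.2 a ha hab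
    exact le_antisymm (h1.2 (ch b) h2.1.1 hba) (h2.2 (ch a) h1.1.1 (h1.1.2.trans hab))
  set Wfib : V → ℝ := fun c => ∑ x ∈ D.filter (fun x => ch x = c), w x with hWfibdef
  have hfib_nonneg : ∀ c, 0 ≤ Wfib c := fun c => Finset.sum_nonneg (fun i _ => hw i)
  have hfib_le : ∀ c ∈ D.image ch, Wfib c ≤ 1/2 := by
    intro c hc
    obtain ⟨x₀, hx₀, rfl⟩ := mem_image.1 hc
    have hvx₀ : v < x₀ := (mem_filter.1 hx₀).2
    have hvc : v < ch x₀ := (hch x₀ hvx₀).1.1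
    have h1 : Wfib (ch x₀) ≤ W (ch x₀) := by
      apply Finset.sum_le_sum_of_subset_of_nonneg
      · intro x hx
        rw [mem_filter] at hx ⊢
        refine ⟨mem_univ _, ?_⟩
        have hvx : v < x := (mem_filter.1 hx.1).2
        calc ch x₀ = ch x := hx.2.symm
          _ ≤ x := (hch x hvx).1.2
      · intro i _ _; exact hw i
    exact h1.trans (hvmax' _ hvc)
  have hD_eq : ∑ c ∈ D.image ch, Wfib c = ∑ x ∈ D, w x :=
    Finset.sum_fiberwise_of_maps_to (fun x hx => mem_image_of_mem ch hx) w
  -- find a medium-weight union of fibers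
  have hG : ∃ G ⊆ D.image ch,
      (1:ℝ)/4 ≤ ∑ c ∈ G, Wfib c ∧ ∑ c ∈ G, Wfib c ≤ 1/2 := by
    by_cases hbig : ∃ c ∈ D.image ch, (1:ℝ)/4 ≤ Wfib c
    · obtain ⟨c, hc, hc4⟩ := hbig
      refine ⟨{c}, singleton_subset_iff.2 hc, ?_, ?_⟩
      · simpa using hc4
      · simpa using hfib_le c hc
    · push_neg at hbig
      obtain ⟨G, hGmem, hGmin⟩ := Finset.exists_min_image
        (((D.image ch).powerset).filter (fun G => (1:ℝ)/4 ≤ ∑ c ∈ G, Wfib c)) card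
        ⟨D.image ch, mem_filter.2 ⟨mem_powerset_self _, by rw [hD_eq]; linarith⟩⟩
      rw [mem_filter, mem_powerset] at hGmem
      refine ⟨G, hGmem.1, hGmem.2, ?_⟩
      have hGne : G.Nonempty := by
        rcases G.eq_empty_or_nonempty with rfl | h
        · exfalso
          have := hGmem.2
          simp at this
          linarith
        · exact h
      obtain ⟨c, hcG⟩ := hGne
      have herase : ∑ x ∈ G.erase c, Wfib x < 1/4 := by
        by_contra h
        have h1 := hGmin (G.erase c) (mem_filter.2
          ⟨mem_powerset.2 ((erase_subset _ _).trans hGmem.1), le_of_not_gt h⟩)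
        have h2 := card_erase_lt_of_mem hcG
        omega
      have hsum : ∑ x ∈ G, Wfib x = Wfib c + ∑ x ∈ G.erase c, Wfib x :=
        (Finset.add_sum_erase _ _ hcG).symm
      have hcsmall := hbig c (hGmem.1 hcG)
      linarith
  obtain ⟨G, hGsub, hG1, hG2⟩ := hG
  set A : Finset V := D.filter (fun x => ch x ∈ G) with hAdef
  set B : Finset V := U ∪ D.filter (fun x => ch x ∉ G) with hBdef
  have hA_sum : ∑ x ∈ A, w x = ∑ c ∈ G, Wfib c := by
    rw [← Finset.sum_fiberwise_of_maps_to
      (show ∀ x ∈ A, ch x ∈ G from fun x hx => (mem_filter.1 hx).2) w]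
    apply sum_congr rfl
    intro c hcG
    have : A.filter (fun x => ch x = c) = D.filter (fun x => ch x = c) := by
      rw [hAdef, filter_filter]
      apply filter_congr
      intro x _
      constructor
      · exact fun h => h.2
      · exact fun h => ⟨h ▸ hcG, h⟩
    rw [this]
  have hdisj : Disjoint U (D.filter (fun x => ch x ∉ G)) := by
    rw [disjoint_left]
    intro x hxU hxD
    exact (mem_filter.1 hxU).2.2 (le_of_lt (mem_filter.1 (mem_filter.1 hxD).1).2)
  have hB_sum : ∑ x ∈ B, w x
      = ∑ x ∈ U, w x + (∑ x ∈ D, w x - ∑ x ∈ A, w x) := by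
    rw [hBdef, sum_union hdisj]
    have := Finset.sum_filter_add_sum_filter_not D (fun x => ch x ∈ G) w
    rw [← hAdef] at this
    linarith
  right
  refine ⟨A, B, ?_, ?_, ?_⟩
  · intro a ha b hb
    rw [hAdef, mem_filter] at ha
    have hva : v < a := (mem_filter.1 ha.1).2
    rcases mem_union.1 hb with hbU | hbD
    · exact hrelU a hva b hbU
    · rw [mem_filter] at hbD
      have hvb : v < b := (mem_filter.1 hbD.1).2
      constructor
      · intro h
        exact hbD.2 (hcheq a hva b hvb h ▸ ha.2)
      · intro h
        exact hbD.2 ((hcheq b hvb a hva h).symm ▸ ha.2)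
  · rw [hA_sum]; exact hG1
  · rw [hB_sum, hA_sum]
    linarith
end

section
/- Let G be a graph and P a dominating induced path in G with vertex ordering p_1,...,p_m, and let I be a set of k consecutive vertices of P. Suppose G contains no induced cycle of length at least k. If a vertex v ∉ P has a neighbor among vertices of P strictly to the left of I and a neighbor strictly to the right of I, then v has a neighbor in I. -/
/-- Let `p : pathGraph m ↪g G` be a dominating induced path of `G`
(an embedding of the path graph is exactly an induced path), let `I` be the window of
`k` consecutive vertices `p i, …, p (i+k-1)`, and suppose `G` has no induced cycle of
length at least `k`.  If a vertex `v` outside `P` has a neighbour strictly to the left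
of `I` and one strictly to the right of `I`, then `v` has a neighbour in `I`. -/
theorem stmt3 {V : Type*} (G : SimpleGraph V) (k m : ℕ)
    (hhole : ∀ l, k ≤ l → IsEmpty (SimpleGraph.cycleGraph l ↪g G))
    (p : SimpleGraph.pathGraph m ↪g G)
    (hdom : ∀ v : V, ∃ j : Fin m, v = p j ∨ G.Adj v (p j))
    (i : ℕ) (hik : i + k ≤ m)
    (v : V) (hv : ∀ j : Fin m, v ≠ p j)
    (hleft : ∃ j : Fin m, (j : ℕ) < i ∧ G.Adj v (p j))
    (hright : ∃ j : Fin m, i + k ≤ (j : ℕ) ∧ G.Adj v (p j)) :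
    ∃ j : Fin m, i ≤ (j : ℕ) ∧ (j : ℕ) < i + k ∧ G.Adj v (p j) := by
  by_contra hcon
  push_neg at hcon
  classical
  obtain ⟨j₀, hj₀i, hj₀adj⟩ := hleft
  obtain ⟨j₁, hj₁i, hj₁adj⟩ := hright
  set L : Finset (Fin m) :=
    Finset.univ.filter (fun j : Fin m => (j : ℕ) < i ∧ G.Adj v (p j)) with hL
  set R : Finset (Fin m) :=
    Finset.univ.filter (fun j : Fin m => i + k ≤ (j : ℕ) ∧ G.Adj v (p j)) with hR
  have hLne : L.Nonempty := ⟨j₀, by simp [hL, hj₀i, hj₀adj]⟩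
  have hRne : R.Nonempty := ⟨j₁, by simp [hR, hj₁i, hj₁adj]⟩
  set a : Fin m := L.max' hLne with ha
  set b : Fin m := R.min' hRne with hb
  have haL : a ∈ L := L.max'_mem hLne
  have hbR : b ∈ R := R.min'_mem hRne
  simp only [hL, Finset.mem_filter, Finset.mem_univ, true_and] at haL
  simp only [hR, Finset.mem_filter, Finset.mem_univ, true_and] at hbR
  obtain ⟨hai, hva⟩ := haL
  obtain ⟨hbi, hvb⟩ := hbR
  set A : ℕ := (a : ℕ) with hA
  set B : ℕ := (b : ℕ) with hB
  -- no neighbour strictly between a and b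
  have hmid : ∀ j : Fin m, A < (j : ℕ) → (j : ℕ) < B → ¬ G.Adj v (p j) := by
    intro j hja hjb hadj
    rcases lt_or_ge (j : ℕ) i with hji | hji
    · have hja' : j ≤ a := L.le_max' j (by simp [hL, hji, hadj])
      have := Fin.le_def.mp hja'
      omega
    · rcases lt_or_ge (j : ℕ) (i + k) with hjk | hjk
      · exact hcon j hji hjk hadj
      · have hjb' : b ≤ j := R.min'_le j (by simp [hR, hjk, hadj])
        have := Fin.le_def.mp hjb'
        omega
  have hBm : B < m := b.isLt
  have hAB : A + (k + 1) ≤ B := by omega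
  set d : ℕ := B - A with hd
  have hdk : k + 1 ≤ d := by omega
  -- path adjacency characterization
  have hpadj : ∀ j₁ j₂ : Fin m, G.Adj (p j₁) (p j₂) ↔
      ((j₁ : ℕ) + 1 = (j₂ : ℕ) ∨ (j₂ : ℕ) + 1 = (j₁ : ℕ)) := by
    intro j₁ j₂
    rw [p.map_adj_iff, SimpleGraph.pathGraph_adj]
  -- neighbours of v among p A .. p B are exactly p A and p B
  have hvchar : ∀ (c : ℕ) (hc : c < m), A ≤ c → c ≤ B →
      (G.Adj v (p ⟨c, hc⟩) ↔ (c = A ∨ c = B)) := by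
    intro c hc h1 h2
    constructor
    · intro hadj
      by_contra hne
      push_neg at hne
      refine hmid ⟨c, hc⟩ ?_ ?_ hadj
      · show A < c; omega
      · show c < B; omega
    · rintro (h | h)
      · have he : (⟨c, hc⟩ : Fin m) = a := Fin.ext (h.trans hA)
        rw [he]; exact hva
      · have he : (⟨c, hc⟩ : Fin m) = b := Fin.ext (h.trans hB)
        rw [he]; exact hvb
  -- the cycle vertices
  set f : Fin (d + 2) → V := fun x =>
    if hx : (x : ℕ) = 0 then v else p ⟨A + ((x : ℕ) - 1), by omega⟩ with hf
  have hfzero : ∀ x : Fin (d + 2), (x : ℕ) = 0 → f x = v := by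
    intro x hx; rw [hf]; exact dif_pos hx
  have hfpos : ∀ x : Fin (d + 2), (x : ℕ) ≠ 0 →
      f x = p ⟨A + ((x : ℕ) - 1), by omega⟩ := by
    intro x hx; rw [hf]; exact dif_neg hx
  have finj : Function.Injective f := by
    intro x y hxy
    by_cases hx : (x : ℕ) = 0 <;> by_cases hy : (y : ℕ) = 0
    · exact Fin.ext (by omega)
    · rw [hfzero x hx, hfpos y hy] at hxy
      exact absurd hxy (hv _)
    · rw [hfpos x hx, hfzero y hy] at hxy
      exact absurd hxy.symm (hv _)
    · rw [hfpos x hx, hfpos y hy] at hxy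
      have h2 : A + ((x : ℕ) - 1) = A + ((y : ℕ) - 1) :=
        congrArg Fin.val (p.injective hxy)
      have hx' := x.isLt
      have hy' := y.isLt
      exact Fin.ext (by omega)
  have key : ∀ x y : Fin (d + 2),
      G.Adj (f x) (f y) ↔ (SimpleGraph.cycleGraph (d + 2)).Adj x y := by
    intro x y
    rw [SimpleGraph.cycleGraph_adj]
    have hsub : ∀ u w : Fin (d + 2),
        (u - w = 1) ↔ ((u : ℕ) = (w : ℕ) + 1 ∨ ((u : ℕ) = 0 ∧ (w : ℕ) = d + 1)) := by
      intro u w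
      have hu := u.isLt
      have hw := w.isLt
      rw [Fin.sub_def, Fin.ext_iff]
      have hv1 : ((1 : Fin (d + 2)) : ℕ) = 1 := by simp
      rw [hv1]
      show (d + 2 - (w : ℕ) + (u : ℕ)) % (d + 2) = 1 ↔ _
      rcases le_or_gt (w : ℕ) (u : ℕ) with h | h
      · have e1 : d + 2 - (w : ℕ) + (u : ℕ) = ((u : ℕ) - (w : ℕ)) + (d + 2) := by omega
        rw [e1, Nat.add_mod_right, Nat.mod_eq_of_lt (by omega)]
        omega
      · rw [Nat.mod_eq_of_lt (by omega)]
        omega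
    rw [hsub, hsub]
    have hx' := x.isLt
    have hy' := y.isLt
    by_cases hx : (x : ℕ) = 0 <;> by_cases hy : (y : ℕ) = 0
    · have hxy : x = y := Fin.ext (by omega)
      subst hxy
      simp only [SimpleGraph.irrefl, false_iff]
      omega
    · rw [hfzero x hx, hfpos y hy,
        hvchar (A + ((y : ℕ) - 1)) (by omega) (by omega) (by omega)]
      omega
    · rw [hfpos x hx, hfzero y hy, G.adj_comm,
        hvchar (A + ((x : ℕ) - 1)) (by omega) (by omega) (by omega)]
      omega
    · rw [hfpos x hx, hfpos y hy, hpadj]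
      simp only [Fin.val_mk]
      omega
  exact (hhole (d + 2) (by omega)).false ⟨⟨f, finj⟩, fun {x y} => key x y⟩
end

section
/- Let G be a graph with a dominating induced path P = p_1,...,p_m, and suppose G has no induced cycle of length at least k. Let I consist of k consecutive vertices of P. Define the left of I as the set of vertices of G outside P all of whose neighbors on P lie strictly left of I, and the right of I symmetrically. Then there is no edge of G between a vertex in the left of I and a vertex in the right of I. -/
open SimpleGraph in
lemma stmt4_cycle_adj_iff' {N : ℕ} (hN : 3 ≤ N) (x y : Fin N) :
    (SimpleGraph.cycleGraph N).Adj x y ↔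
      ((x : ℕ) + 1 = (y : ℕ) ∨ (y : ℕ) + 1 = (x : ℕ) ∨
        ((x : ℕ) + 1 = N ∧ (y : ℕ) = 0) ∨ ((y : ℕ) + 1 = N ∧ (x : ℕ) = 0)) := by
  have hx := x.isLt
  have hy := y.isLt
  have key : ∀ c : ℕ, c < 2 * N → (c % N = 1 ↔ c = 1 ∨ c = N + 1) := by
    intro c hc
    rcases Nat.lt_or_ge c N with h | h
    · rw [Nat.mod_eq_of_lt h]; omega
    · rw [Nat.mod_eq_sub_mod h, Nat.mod_eq_of_lt (by omega)]; omega
  rw [SimpleGraph.cycleGraph_adj', Fin.sub_def, Fin.sub_def]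
  simp only
  rw [key _ (by omega), key _ (by omega)]
  omega

/-- The vertex map for the induced cycle `p a, p (a+1), …, p b, v, u`. -/
def stmt4CycMap {V : Type*} {m : ℕ} (p : Fin m → V) (u v : V) (a b : ℕ) (hb : b < m)
    (hab : a ≤ b) : Fin (b - a + 3) → V := fun x =>
  if h : (x : ℕ) ≤ b - a then p ⟨a + x, by omega⟩
  else if (x : ℕ) = b - a + 1 then v else u

lemma stmt4_aux {V : Type*} (G : SimpleGraph V) (k m : ℕ)
    (hhole : ∀ l, k ≤ l → IsEmpty (SimpleGraph.cycleGraph l ↪g G))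
    (p : SimpleGraph.pathGraph m ↪g G)
    (u v : V) (a b : Fin m) (hab : (a : ℕ) + k + 1 ≤ (b : ℕ))
    (hau : G.Adj u (p a)) (hamax : ∀ j : Fin m, G.Adj u (p j) → (j : ℕ) ≤ (a : ℕ))
    (hbv : G.Adj v (p b)) (hbmin : ∀ j : Fin m, G.Adj v (p j) → (b : ℕ) ≤ (j : ℕ))
    (hup : ∀ j : Fin m, u ≠ p j) (hvp : ∀ j : Fin m, v ≠ p j)
    (huv : G.Adj u v) : False := by
  have hbm : (b : ℕ) < m := b.isLt
  have hab' : (a : ℕ) ≤ (b : ℕ) := by omega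
  set N := (b : ℕ) - (a : ℕ) + 3 with hNdef
  have hkN : k ≤ N := by omega
  have h3 : 3 ≤ N := by omega
  set f : Fin N → V := stmt4CycMap p u v a b hbm hab' with hf
  have hflt : ∀ (x : Fin N) (h : (x : ℕ) ≤ (b : ℕ) - (a : ℕ)),
      f x = p ⟨(a : ℕ) + (x : ℕ), by omega⟩ := by
    intro x h
    simp only [hf, stmt4CycMap, dif_pos h]
  have hfv : ∀ (x : Fin N), (x : ℕ) = (b : ℕ) - (a : ℕ) + 1 → f x = v := by
    intro x h
    simp only [hf, stmt4CycMap, dif_neg (by omega : ¬ (x : ℕ) ≤ (b : ℕ) - (a : ℕ)), if_pos h]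
  have hfu : ∀ (x : Fin N), (x : ℕ) = (b : ℕ) - (a : ℕ) + 2 → f x = u := by
    intro x h
    simp only [hf, stmt4CycMap, dif_neg (by omega : ¬ (x : ℕ) ≤ (b : ℕ) - (a : ℕ)),
      if_neg (by omega : ¬ (x : ℕ) = (b : ℕ) - (a : ℕ) + 1)]
  have huP : ∀ (x : ℕ) (h : x ≤ (b : ℕ) - (a : ℕ)),
      (G.Adj u (p ⟨(a : ℕ) + x, by omega⟩) ↔ x = 0) := by
    intro x h
    constructor
    · intro hadj; have := hamax _ hadj; simp only at this; omega
    · rintro rfl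
      have : (⟨(a : ℕ) + 0, by omega⟩ : Fin m) = a := Fin.ext (by simp)
      rw [this]; exact hau
  have hvP : ∀ (x : ℕ) (h : x ≤ (b : ℕ) - (a : ℕ)),
      (G.Adj v (p ⟨(a : ℕ) + x, by omega⟩) ↔ x = (b : ℕ) - (a : ℕ)) := by
    intro x h
    constructor
    · intro hadj; have := hbmin _ hadj; simp only at this; omega
    · rintro rfl
      have : (⟨(a : ℕ) + ((b : ℕ) - (a : ℕ)), by omega⟩ : Fin m) = b := Fin.ext (by simp; omega)
      rw [this]; exact hbv
  have tri : ∀ x : Fin N, (x : ℕ) ≤ (b : ℕ) - (a : ℕ) ∨ (x : ℕ) = (b : ℕ) - (a : ℕ) + 1 ∨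
      (x : ℕ) = (b : ℕ) - (a : ℕ) + 2 := by
    intro x; have := x.isLt; omega
  have hinj : Function.Injective f := by
    intro x y hxy
    rcases tri x with hx | hx | hx <;> rcases tri y with hy | hy | hy
    · rw [hflt x hx, hflt y hy] at hxy
      have := p.injective hxy
      have : (a : ℕ) + (x : ℕ) = (a : ℕ) + (y : ℕ) := congrArg Fin.val this
      exact Fin.ext (by omega)
    · rw [hflt x hx, hfv y hy] at hxy; exact absurd hxy.symm (hvp _)
    · rw [hflt x hx, hfu y hy] at hxy; exact absurd hxy.symm (hup _)
    · rw [hfv x hx, hflt y hy] at hxy; exact absurd hxy (hvp _)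
    · exact Fin.ext (by omega)
    · rw [hfv x hx, hfu y hy] at hxy; exact absurd hxy.symm huv.ne
    · rw [hfu x hx, hflt y hy] at hxy; exact absurd hxy (hup _)
    · rw [hfu x hx, hfv y hy] at hxy; exact absurd hxy huv.ne
    · exact Fin.ext (by omega)
  have hadj : ∀ x y : Fin N, G.Adj (f x) (f y) ↔ (SimpleGraph.cycleGraph N).Adj x y := by
    intro x y
    rw [stmt4_cycle_adj_iff' h3]
    rcases tri x with hx | hx | hx <;> rcases tri y with hy | hy | hy
    · rw [hflt x hx, hflt y hy, p.map_rel_iff, SimpleGraph.pathGraph_adj]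
      simp only
      omega
    · rw [hflt x hx, hfv y hy]
      rw [show (G.Adj (p ⟨(a:ℕ)+(x:ℕ), by omega⟩) v) ↔
          G.Adj v (p ⟨(a:ℕ)+(x:ℕ), by omega⟩) from SimpleGraph.adj_comm .., hvP _ hx]
      omega
    · rw [hflt x hx, hfu y hy]
      rw [show (G.Adj (p ⟨(a:ℕ)+(x:ℕ), by omega⟩) u) ↔
          G.Adj u (p ⟨(a:ℕ)+(x:ℕ), by omega⟩) from SimpleGraph.adj_comm .., huP _ hx]
      omega
    · rw [hfv x hx, hflt y hy, hvP _ hy]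
      omega
    · rw [hfv x hx, hfv y hy]
      exact iff_of_false (G.irrefl) (by omega)
    · rw [hfv x hx, hfu y hy]
      exact iff_of_true huv.symm (by omega)
    · rw [hfu x hx, hflt y hy, huP _ hy]
      omega
    · rw [hfu x hx, hfv y hy]
      exact iff_of_true huv (by omega)
    · rw [hfu x hx, hfu y hy]
      exact iff_of_false (G.irrefl) (by omega)
  exact (hhole N hkN).false ⟨⟨f, hinj⟩, fun {x y} => hadj x y⟩

/-- With a dominating induced path `p : pathGraph m ↪g G` in a graph
with no induced cycle of length at least `k`, and `I = {p i, …, p (i+k-1)}`, there is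
no edge between a vertex in the left of `I` (a vertex outside `P` all of whose
neighbours on `P` are strictly left of `I`) and a vertex in the right of `I`. -/
theorem stmt4 {V : Type*} (G : SimpleGraph V) (k m : ℕ)
    (hhole : ∀ l, k ≤ l → IsEmpty (SimpleGraph.cycleGraph l ↪g G))
    (p : SimpleGraph.pathGraph m ↪g G)
    (hdom : ∀ v : V, ∃ j : Fin m, v = p j ∨ G.Adj v (p j))
    (i : ℕ) (hik : i + k ≤ m)
    (u v : V)
    (hu : (∀ j : Fin m, u ≠ p j) ∧ ∀ j : Fin m, G.Adj u (p j) → (j : ℕ) < i)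
    (hv : (∀ j : Fin m, v ≠ p j) ∧ ∀ j : Fin m, G.Adj v (p j) → i + k ≤ (j : ℕ)) :
    ¬ G.Adj u v := by
  intro huv
  classical
  have hune : (Finset.univ.filter fun j : Fin m => G.Adj u (p j)).Nonempty := by
    obtain ⟨j, hj | hj⟩ := hdom u
    · exact absurd hj (hu.1 j)
    · exact ⟨j, by simp [hj]⟩
  have hvne : (Finset.univ.filter fun j : Fin m => G.Adj v (p j)).Nonempty := by
    obtain ⟨j, hj | hj⟩ := hdom v
    · exact absurd hj (hv.1 j)
    · exact ⟨j, by simp [hj]⟩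
  set a := Finset.max' _ hune with ha
  set b := Finset.min' _ hvne with hb
  have hau : G.Adj u (p a) := by
    have := Finset.max'_mem _ hune; rw [← ha] at this; simpa using this
  have hbv : G.Adj v (p b) := by
    have := Finset.min'_mem _ hvne; rw [← hb] at this; simpa using this
  have hamax : ∀ j : Fin m, G.Adj u (p j) → (j : ℕ) ≤ (a : ℕ) := by
    intro j hj; exact Finset.le_max' _ j (by simpa using hj)
  have hbmin : ∀ j : Fin m, G.Adj v (p j) → (b : ℕ) ≤ (j : ℕ) := by
    intro j hj; exact Finset.min'_le _ j (by simpa using hj)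
  have hai : (a : ℕ) < i := hu.2 a hau
  have hbk : i + k ≤ (b : ℕ) := hv.2 b hbv
  exact stmt4_aux G k m hhole p u v a b (by omega) hau hamax hbv hbmin hu.1 hv.1 huv
end

section
/- Suppose C is a hereditary class of graphs with the strong Erdős–Hajnal property with constant c ∈ (0,1): every graph in C on n ≥ 1/c vertices contains two disjoint vertex sets X, Y each of size at least ⌈cn⌉ such that either all edges between X and Y are present or none are. Let c' > 0 satisfy c^{c'} ≥ 1/2. Then every graph G in C on n vertices contains an induced P4-free subgraph on at least n^{c'} vertices. -/
open SimpleGraph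

lemma bool1 : ∀ g : Fin 4 → Bool,
    (∀ i j : Fin 4, ((i : ℕ) + 1 = j ∨ (j : ℕ) + 1 = i) → g i = g j) → ∀ i, g i = g 0 := by
  decide

lemma bool2 : ∀ g : Fin 4 → Bool,
    (∀ i j : Fin 4, i ≠ j → ¬((i : ℕ) + 1 = j ∨ (j : ℕ) + 1 = i) → g i = g j) →
    ∀ i, g i = g 0 := by
  decide

lemma transfer {n m : ℕ} (G : SimpleGraph (Fin n)) (e : Fin m ↪ Fin n)
    (s : Finset (Fin m))
    (h : IsEmpty (pathGraph 4 ↪g (G.comap e).induce (s : Set (Fin m)))) :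
    IsEmpty (pathGraph 4 ↪g G.induce ((s.image e : Finset (Fin n)) : Set (Fin n))) := by
  constructor
  intro φ
  let iso : (G.comap e).induce (s : Set (Fin m)) ≃g
      G.induce ((s.image e : Finset (Fin n)) : Set (Fin n)) :=
    { toEquiv := (Equiv.Set.image (⇑e) (s : Set (Fin m)) e.injective).trans
        (Equiv.setCongr (Finset.coe_image).symm)
      map_rel_iff' := by
        intro a b
        simp [Equiv.Set.image, Equiv.Set.imageOfInjOn, comap_adj, Equiv.setCongr,
          Equiv.subtypeEquivProp, Equiv.subtypeEquiv, Function.Embedding.coe_subtype] }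
  exact h.elim (SimpleGraph.Embedding.comp iso.symm.toEmbedding φ)

lemma small_free {n : ℕ} (G : SimpleGraph (Fin n)) (s : Finset (Fin n)) (hs : s.card ≤ 3) :
    IsEmpty (pathGraph 4 ↪g G.induce (s : Set (Fin n))) := by
  constructor
  intro φ
  have h4 : Fintype.card (Fin 4) ≤ Fintype.card (s : Set (Fin n)) :=
    Fintype.card_le_of_injective _ φ.injective
  simp only [Fintype.card_fin] at h4
  have : Fintype.card (s : Set (Fin n)) = s.card := by simp
  omega

lemma union_free {n : ℕ} (G : SimpleGraph (Fin n)) {A B : Finset (Fin n)}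
    (hAB : Disjoint A B)
    (hbip : (∀ x ∈ A, ∀ y ∈ B, G.Adj x y) ∨ (∀ x ∈ A, ∀ y ∈ B, ¬ G.Adj x y))
    (hA : IsEmpty (pathGraph 4 ↪g G.induce (A : Set (Fin n))))
    (hB : IsEmpty (pathGraph 4 ↪g G.induce (B : Set (Fin n)))) :
    IsEmpty (pathGraph 4 ↪g G.induce ((A ∪ B : Finset (Fin n)) : Set (Fin n))) := by
  constructor
  intro φ
  set f : Fin 4 → Fin n := fun i => ((φ i : Fin n)) with hf
  have hmem : ∀ i, f i ∈ A ∪ B := by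
    intro i
    have := (φ i).2
    simpa using this
  have hinj : Function.Injective f := by
    intro i j hij
    exact φ.injective (Subtype.ext hij)
  have hadj : ∀ i j : Fin 4, (pathGraph 4).Adj i j ↔ G.Adj (f i) (f j) := by
    intro i j
    exact (φ.map_rel_iff).symm
  set g : Fin 4 → Bool := fun i => decide (f i ∈ A) with hg
  have key : ∀ i, g i = g 0 := by
    rcases hbip with hc | he
    · apply bool2
      intro i j hij hnadj
      by_contra hne
      have hgij : (f i ∈ A ∧ f j ∉ A) ∨ (f j ∈ A ∧ f i ∉ A) := by
        rcases Bool.eq_false_or_eq_true (g i) with h1 | h1 <;>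
          rcases Bool.eq_false_or_eq_true (g j) with h2 | h2 <;>
            simp [hg, h1, h2] at hne h1 h2 ⊢ <;> tauto
      have hnadj' : ¬ G.Adj (f i) (f j) := by
        intro hadj'
        exact hnadj (pathGraph_adj.mp ((hadj i j).mpr hadj'))
      rcases hgij with ⟨hi, hj⟩ | ⟨hj, hi⟩
      · have hjB : f j ∈ B := (Finset.mem_union.mp (hmem j)).resolve_left hj
        exact hnadj' (hc _ hi _ hjB)
      · have hiB : f i ∈ B := (Finset.mem_union.mp (hmem i)).resolve_left hi
        exact hnadj' ((hc _ hj _ hiB).symm)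
    · apply bool1
      intro i j hpadj
      by_contra hne
      have hgij : (f i ∈ A ∧ f j ∉ A) ∨ (f j ∈ A ∧ f i ∉ A) := by
        rcases Bool.eq_false_or_eq_true (g i) with h1 | h1 <;>
          rcases Bool.eq_false_or_eq_true (g j) with h2 | h2 <;>
            simp [hg, h1, h2] at hne h1 h2 ⊢ <;> tauto
      have hadj' : G.Adj (f i) (f j) := (hadj i j).mp (pathGraph_adj.mpr hpadj)
      rcases hgij with ⟨hi, hj⟩ | ⟨hj, hi⟩
      · have hjB : f j ∈ B := (Finset.mem_union.mp (hmem j)).resolve_left hj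
        exact he _ hi _ hjB hadj'
      · have hiB : f i ∈ B := (Finset.mem_union.mp (hmem i)).resolve_left hi
        exact he _ hj _ hiB hadj'.symm
  rcases Bool.eq_false_or_eq_true (g 0) with h0 | h0
  · -- all in A
    have hmemA : ∀ i, f i ∈ A := by
      intro i
      have : g i = true := (key i).trans h0
      simpa [hg] using this
    refine hA.elim ⟨⟨fun i => ⟨f i, by simpa using hmemA i⟩, ?_⟩, ?_⟩
    · intro i j hij
      exact hinj (by simpa using hij)
    · intro i j
      exact (hadj i j).symm
  · -- all in B
    have hmemB : ∀ i, f i ∈ B := by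
      intro i
      have : g i = false := (key i).trans h0
      have hiA : f i ∉ A := by simpa [hg] using this
      exact (Finset.mem_union.mp (hmem i)).resolve_left hiA
    refine hB.elim ⟨⟨fun i => ⟨f i, by simpa using hmemB i⟩, ?_⟩, ?_⟩
    · intro i j hij
      exact hinj (by simpa using hij)
    · intro i j
      exact (hadj i j).symm


/-- Let `C` be a hereditary class of graphs (one predicate for each
number of vertices, closed under induced subgraphs, i.e. under graph embeddings) with
the strong Erdős–Hajnal property with constant `c ∈ (0,1)`: every graph of `C` on
`n ≥ 1/c` vertices has two disjoint sets `X, Y` of size at least `⌈cn⌉` that are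
completely joined or completely nonadjacent.  If `c' > 0` satisfies `c ^ c' ≥ 1/2`,
then every graph of `C` on `n` vertices has a `P₄`-free induced subgraph on at least
`n ^ c'` vertices. -/
theorem stmt6 (C : ∀ n : ℕ, SimpleGraph (Fin n) → Prop)
    (hher : ∀ (n m : ℕ) (G : SimpleGraph (Fin n)) (H : SimpleGraph (Fin m)),
      C n G → Nonempty (H ↪g G) → C m H)
    (c : ℝ) (hc0 : 0 < c) (hc1 : c < 1)
    (hSEH : ∀ (n : ℕ) (G : SimpleGraph (Fin n)), C n G → (1 / c ≤ (n : ℝ)) →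
      ∃ X Y : Finset (Fin n), Disjoint X Y ∧
        ⌈c * n⌉₊ ≤ X.card ∧ ⌈c * n⌉₊ ≤ Y.card ∧
        ((∀ x ∈ X, ∀ y ∈ Y, G.Adj x y) ∨ (∀ x ∈ X, ∀ y ∈ Y, ¬ G.Adj x y)))
    (c' : ℝ) (hc' : 0 < c') (hcc' : (1 : ℝ) / 2 ≤ c ^ c') :
    ∀ (n : ℕ) (G : SimpleGraph (Fin n)), C n G →
      ∃ s : Finset (Fin n), (n : ℝ) ^ c' ≤ (s.card : ℝ) ∧
        IsEmpty (SimpleGraph.pathGraph 4 ↪g G.induce (s : Set (Fin n))) := by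
  intro n
  induction n using Nat.strong_induction_on with
  | _ n IH =>
  intro G hG
  by_cases hn : (1 : ℝ) / c ≤ (n : ℝ)
  · -- inductive step
    obtain ⟨X, Y, hXY, hXc, hYc, hbip⟩ := hSEH n G hG hn
    have hcn1 : (1 : ℝ) ≤ c * n := by
      rw [div_le_iff₀ hc0] at hn
      linarith [mul_comm c (n : ℝ)]
    have hceil1 : 1 ≤ ⌈c * (n : ℝ)⌉₊ := Nat.one_le_ceil_iff.mpr (by linarith)
    have hcardsum : X.card + Y.card ≤ n := by
      have := Finset.card_le_card (Finset.subset_univ (X ∪ Y))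
      rw [Finset.card_union_of_disjoint hXY] at this
      simpa using this
    have hXlt : X.card < n := by omega
    have hYlt : Y.card < n := by omega
    -- induced graph on X
    set eX : Fin X.card ↪ Fin n := (X.orderEmbOfFin rfl).toEmbedding with heX
    set eY : Fin Y.card ↪ Fin n := (Y.orderEmbOfFin rfl).toEmbedding with heY
    have hCX : C X.card (G.comap eX) :=
      hher n X.card G _ hG ⟨SimpleGraph.Embedding.comap eX G⟩
    have hCY : C Y.card (G.comap eY) :=
      hher n Y.card G _ hG ⟨SimpleGraph.Embedding.comap eY G⟩
    obtain ⟨sX, hsXcard, hsXfree⟩ := IH X.card hXlt (G.comap eX) hCX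
    obtain ⟨sY, hsYcard, hsYfree⟩ := IH Y.card hYlt (G.comap eY) hCY
    set A : Finset (Fin n) := sX.image eX with hA
    set B : Finset (Fin n) := sY.image eY with hB
    have hAX : A ⊆ X := by
      intro x hx
      obtain ⟨a, -, rfl⟩ := Finset.mem_image.mp hx
      exact X.orderEmbOfFin_mem rfl a
    have hBY : B ⊆ Y := by
      intro x hx
      obtain ⟨a, -, rfl⟩ := Finset.mem_image.mp hx
      exact Y.orderEmbOfFin_mem rfl a
    have hABdisj : Disjoint A B := hXY.mono hAX hBY
    have hAcard : A.card = sX.card := Finset.card_image_of_injective sX eX.injective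
    have hBcard : B.card = sY.card := Finset.card_image_of_injective sY eY.injective
    have hAfree := transfer G eX sX hsXfree
    have hBfree := transfer G eY sY hsYfree
    refine ⟨A ∪ B, ?_, ?_⟩
    · -- cardinality
      have hXreal : c * n ≤ (X.card : ℝ) := by
        calc c * (n:ℝ) ≤ (⌈c * (n:ℝ)⌉₊ : ℝ) := Nat.le_ceil _
        _ ≤ (X.card : ℝ) := by exact_mod_cast hXc
      have hYreal : c * n ≤ (Y.card : ℝ) := by
        calc c * (n:ℝ) ≤ (⌈c * (n:ℝ)⌉₊ : ℝ) := Nat.le_ceil _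
        _ ≤ (Y.card : ℝ) := by exact_mod_cast hYc
      have hcn0 : (0:ℝ) ≤ c * n := by positivity
      have hX' : (c * n) ^ c' ≤ ((X.card : ℝ)) ^ c' :=
        Real.rpow_le_rpow hcn0 hXreal hc'.le
      have hY' : (c * n) ^ c' ≤ ((Y.card : ℝ)) ^ c' :=
        Real.rpow_le_rpow hcn0 hYreal hc'.le
      have hsplit : (c * n) ^ c' = c ^ c' * (n:ℝ) ^ c' :=
        Real.mul_rpow hc0.le (Nat.cast_nonneg n)
      have hmain : (n:ℝ) ^ c' ≤ 2 * (c * n) ^ c' := by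
        rw [hsplit]
        have h1 : (1:ℝ) ≤ 2 * c ^ c' := by linarith
        have h2 : (0:ℝ) ≤ (n:ℝ) ^ c' := Real.rpow_nonneg (Nat.cast_nonneg n) _
        calc (n:ℝ) ^ c' = 1 * (n:ℝ) ^ c' := (one_mul _).symm
        _ ≤ (2 * c ^ c') * (n:ℝ) ^ c' := mul_le_mul_of_nonneg_right h1 h2
        _ = 2 * (c ^ c' * (n:ℝ) ^ c') := by ring
      have hcard : ((A ∪ B).card : ℝ) = (A.card : ℝ) + (B.card : ℝ) := by
        rw [Finset.card_union_of_disjoint hABdisj]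
        push_cast
        ring
      rw [hcard, hAcard, hBcard]
      calc (n:ℝ) ^ c' ≤ 2 * (c * n) ^ c' := hmain
      _ = (c * n) ^ c' + (c * n) ^ c' := by ring
      _ ≤ ((X.card : ℝ)) ^ c' + ((Y.card : ℝ)) ^ c' := add_le_add hX' hY'
      _ ≤ (sX.card : ℝ) + (sY.card : ℝ) := add_le_add hsXcard hsYcard
    · -- P4-freeness
      apply union_free G hABdisj _ hAfree hBfree
      rcases hbip with h | h
      · exact Or.inl fun x hx y hy => h x (hAX hx) y (hBY hy)
      · exact Or.inr fun x hx y hy => h x (hAX hx) y (hBY hy)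
  · -- base case: n < 1/c
    push_neg at hn
    obtain ⟨s, -, hscard⟩ := Finset.exists_subset_card_eq (s := (Finset.univ : Finset (Fin n)))
      (n := min n 2) (by simp)
    refine ⟨s, ?_, small_free G s (by omega)⟩
    rw [hscard]
    match n with
    | 0 => simp [Real.zero_rpow hc'.ne']
    | 1 => simp
    | (k+2) =>
      have h2 : min (k+2) 2 = 2 := by omega
      rw [h2]
      have hn0 : (0:ℝ) ≤ ((k+2 : ℕ) : ℝ) := Nat.cast_nonneg _
      have hle : ((k+2:ℕ):ℝ) ^ c' ≤ (1/c) ^ c' :=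
        Real.rpow_le_rpow hn0 hn.le hc'.le
      have hpow : (1/c) ^ c' = (c ^ c')⁻¹ := by
        rw [one_div, Real.inv_rpow hc0.le]
      have hpos : (0:ℝ) < c ^ c' := Real.rpow_pos_of_pos hc0 _
      have : (c ^ c')⁻¹ ≤ 2 := by
        rw [inv_le_comm₀ (by positivity) (by norm_num)]
        linarith
      push_cast at hle ⊢
      linarith
end

section
/- If a hereditary class C of graphs has the strong Erdős–Hajnal property (there is c > 0 such that every n-vertex graph in C, for n sufficiently large, contains a complete ⌈cn⌉-bipartite pair or an empty ⌈cn⌉-bipartite pair), then C has the Erdős–Hajnal property: there exists c'' > 0 such that every n-vertex graph in C contains a clique or a stable set of size at least n^{c''}. -/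
open Finset

private lemma clique_map_comap {n m : ℕ} (G : SimpleGraph (Fin n)) (f : Fin m ↪ Fin n)
    (A : Finset (Fin m)) (h : (SimpleGraph.comap f G).IsClique A) :
    G.IsClique (A.map f) := by
  intro x hx y hy hxy
  simp only [Finset.coe_map, Set.mem_image, Finset.mem_coe] at hx hy
  obtain ⟨a, ha, rfl⟩ := hx
  obtain ⟨b, hb, rfl⟩ := hy
  exact h ha hb (fun e => hxy (by rw [e]))

private lemma stable_map_comap {n m : ℕ} (G : SimpleGraph (Fin n)) (f : Fin m ↪ Fin n)
    (A : Finset (Fin m)) (h : (SimpleGraph.comap f G)ᶜ.IsClique A) :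
    Gᶜ.IsClique (A.map f) := by
  intro x hx y hy hxy
  simp only [Finset.coe_map, Set.mem_image, Finset.mem_coe] at hx hy
  obtain ⟨a, ha, rfl⟩ := hx
  obtain ⟨b, hb, rfl⟩ := hy
  have hab : a ≠ b := fun e => hxy (by rw [e])
  have := h ha hb hab
  simp only [SimpleGraph.compl_adj, SimpleGraph.comap_adj] at this ⊢
  exact ⟨hxy, this.2⟩

set_option maxHeartbeats 1000000 in
private lemma key_lemma (C : ∀ n : ℕ, SimpleGraph (Fin n) → Prop)
    (hher : ∀ (n m : ℕ) (G : SimpleGraph (Fin n)) (H : SimpleGraph (Fin m)),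
      C n G → Nonempty (H ↪g G) → C m H)
    (c : ℝ) (hc : 0 < c) (N0 : ℕ) (hN0 : 1 ≤ N0)
    (hSEH : ∀ n : ℕ, N0 < n → ∀ G : SimpleGraph (Fin n), C n G →
      ∃ X Y : Finset (Fin n), Disjoint X Y ∧
        X.card = ⌈c * n⌉₊ ∧ Y.card = ⌈c * n⌉₊ ∧
        ((∀ x ∈ X, ∀ y ∈ Y, G.Adj x y) ∨ (∀ x ∈ X, ∀ y ∈ Y, ¬ G.Adj x y)))
    (t : ℝ) (ht : 0 < t) (hct : c⁻¹ ^ (2 * t) = 2) :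
    ∀ n : ℕ, ∀ G : SimpleGraph (Fin n), C n G →
      ∃ A B : Finset (Fin n), G.IsClique A ∧ Gᶜ.IsClique B ∧
        ((n : ℝ) / N0) ^ (2 * t) ≤ (A.card : ℝ) * B.card := by
  intro n
  induction n using Nat.strong_induction_on with
  | _ n IH =>
  intro G hCG
  rcases le_or_gt n N0 with hn | hn
  · -- base case
    rcases Nat.eq_zero_or_pos n with rfl | hn1
    · refine ⟨∅, ∅, by simp, by simp, ?_⟩
      simp only [Nat.cast_zero, Finset.card_empty, zero_div]
      rw [Real.zero_rpow (by positivity)]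
      norm_num
    · refine ⟨{⟨0, hn1⟩}, {⟨0, hn1⟩}, by simp, by simp, ?_⟩
      simp only [Finset.card_singleton, Nat.cast_one, mul_one]
      apply Real.rpow_le_one (by positivity) _ (by positivity)
      rw [div_le_one (by exact_mod_cast lt_of_lt_of_le Nat.zero_lt_one hN0)]
      exact_mod_cast hn
  · -- inductive step
    obtain ⟨X, Y, hdisj, hX, hY, hcase⟩ := hSEH n hn G hCG
    have hn1 : 0 < n := lt_of_le_of_lt (Nat.zero_le _) hn
    have hm1 : 1 ≤ ⌈c * n⌉₊ := Nat.one_le_ceil_iff.mpr (by positivity)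
    have h2m : X.card + Y.card ≤ n := by
      rw [← Finset.card_union_of_disjoint hdisj]
      simpa using Finset.card_le_univ (X ∪ Y)
    have hXn : X.card < n := by omega
    have hYn : Y.card < n := by omega
    have hXc : c * n ≤ (X.card : ℝ) := by rw [hX]; exact Nat.le_ceil _
    have hYc : c * n ≤ (Y.card : ℝ) := by rw [hY]; exact Nat.le_ceil _
    -- induced subgraphs
    set fX : Fin X.card ↪o Fin n := X.orderEmbOfFin rfl with hfX
    set fY : Fin Y.card ↪o Fin n := Y.orderEmbOfFin rfl with hfY
    set HX := SimpleGraph.comap (fX.toEmbedding : Fin X.card → Fin n) G with hHX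
    set HY := SimpleGraph.comap (fY.toEmbedding : Fin Y.card → Fin n) G with hHY
    have hCX : C X.card HX := hher n X.card G HX hCG ⟨SimpleGraph.Embedding.comap fX.toEmbedding G⟩
    have hCY : C Y.card HY := hher n Y.card G HY hCG ⟨SimpleGraph.Embedding.comap fY.toEmbedding G⟩
    obtain ⟨AX, BX, hAX, hBX, hpX⟩ := IH X.card hXn HX hCX
    obtain ⟨AY, BY, hAY, hBY, hpY⟩ := IH Y.card hYn HY hCY
    set AX' := AX.map fX.toEmbedding with hAX'
    set BX' := BX.map fX.toEmbedding with hBX'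
    set AY' := AY.map fY.toEmbedding with hAY'
    set BY' := BY.map fY.toEmbedding with hBY'
    have hAX'X : ∀ x ∈ AX', x ∈ X := by
      intro x hx; obtain ⟨a, _, rfl⟩ := Finset.mem_map.mp hx; exact X.orderEmbOfFin_mem rfl a
    have hBX'X : ∀ x ∈ BX', x ∈ X := by
      intro x hx; obtain ⟨a, _, rfl⟩ := Finset.mem_map.mp hx; exact X.orderEmbOfFin_mem rfl a
    have hAY'Y : ∀ x ∈ AY', x ∈ Y := by
      intro x hx; obtain ⟨a, _, rfl⟩ := Finset.mem_map.mp hx; exact Y.orderEmbOfFin_mem rfl a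
    have hBY'Y : ∀ x ∈ BY', x ∈ Y := by
      intro x hx; obtain ⟨a, _, rfl⟩ := Finset.mem_map.mp hx; exact Y.orderEmbOfFin_mem rfl a
    have hclAX' : G.IsClique AX' := clique_map_comap G fX.toEmbedding AX hAX
    have hclAY' : G.IsClique AY' := clique_map_comap G fY.toEmbedding AY hAY
    have hstBX' : Gᶜ.IsClique BX' := stable_map_comap G fX.toEmbedding BX hBX
    have hstBY' : Gᶜ.IsClique BY' := stable_map_comap G fY.toEmbedding BY hBY
    -- arithmetic common part
    have hN0R : (0:ℝ) < N0 := by exact_mod_cast lt_of_lt_of_le Nat.zero_lt_one hN0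
    have harith : ((n:ℝ)/N0) ^ (2*t) ≤ ((X.card:ℝ)/N0) ^ (2*t) + ((Y.card:ℝ)/N0) ^ (2*t) := by
      have h1 : ((n:ℝ)/N0) ^ (2*t) = 2 * ((c * n / N0) ^ (2*t)) := by
        have he : (n:ℝ)/N0 = c⁻¹ * (c * n / N0) := by field_simp
        rw [he, Real.mul_rpow (by positivity) (by positivity), hct]
      have h2 : (c * (n:ℝ) / N0) ^ (2*t) ≤ ((X.card:ℝ)/N0) ^ (2*t) :=
        Real.rpow_le_rpow (by positivity) (by gcongr) (by positivity)
      have h3 : (c * (n:ℝ) / N0) ^ (2*t) ≤ ((Y.card:ℝ)/N0) ^ (2*t) :=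
        Real.rpow_le_rpow (by positivity) (by gcongr) (by positivity)
      linarith
    have hcards : (AX'.card : ℝ) = AX.card ∧ (AY'.card : ℝ) = AY.card ∧
        (BX'.card : ℝ) = BX.card ∧ (BY'.card : ℝ) = BY.card := by
      simp [hAX', hAY', hBX', hBY']
    obtain ⟨e1, e2, e3, e4⟩ := hcards
    have hax0 : (0:ℝ) ≤ AX.card := by positivity
    have hay0 : (0:ℝ) ≤ AY.card := by positivity
    have hbx0 : (0:ℝ) ≤ BX.card := by positivity
    have hby0 : (0:ℝ) ≤ BY.card := by positivity
    rcases hcase with hcomp | hemp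
    · -- complete pair: union of cliques
      have hdA : Disjoint AX' AY' :=
        hdisj.mono (fun x hx => hAX'X x hx) (fun x hx => hAY'Y x hx)
      have hclU : G.IsClique (↑(AX' ∪ AY') : Set (Fin n)) := by
        intro x hx y hy hxy
        simp only [Finset.coe_union, Set.mem_union, Finset.mem_coe] at hx hy
        rcases hx with hx | hx <;> rcases hy with hy | hy
        · exact hclAX' hx hy hxy
        · exact hcomp x (hAX'X x hx) y (hAY'Y y hy)
        · exact (hcomp y (hAX'X y hy) x (hAY'Y x hx)).symm
        · exact hclAY' hx hy hxy
      have hcardU : ((AX' ∪ AY').card : ℝ) = (AX.card : ℝ) + AY.card := by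
        rw [Finset.card_union_of_disjoint hdA]
        rw [← e1, ← e2]; push_cast; ring
      rcases le_total (BX.card : ℝ) (BY.card : ℝ) with hb | hb
      · refine ⟨AX' ∪ AY', BY', hclU, hstBY', ?_⟩
        rw [hcardU, e4]
        have h5 : (AX.card:ℝ)*BX.card + (AY.card:ℝ)*BY.card ≤ ((AX.card:ℝ)+AY.card)*BY.card := by
          nlinarith [mul_nonneg hax0 (sub_nonneg.mpr hb)]
        linarith
      · refine ⟨AX' ∪ AY', BX', hclU, hstBX', ?_⟩
        rw [hcardU, e3]
        have h5 : (AX.card:ℝ)*BX.card + (AY.card:ℝ)*BY.card ≤ ((AX.card:ℝ)+AY.card)*BX.card := by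
          nlinarith [mul_nonneg hay0 (sub_nonneg.mpr hb)]
        linarith
    · -- empty pair: union of stable sets
      have hdB : Disjoint BX' BY' :=
        hdisj.mono (fun x hx => hBX'X x hx) (fun x hx => hBY'Y x hx)
      have hstU : Gᶜ.IsClique (↑(BX' ∪ BY') : Set (Fin n)) := by
        intro x hx y hy hxy
        simp only [Finset.coe_union, Set.mem_union, Finset.mem_coe] at hx hy
        have hne : Gᶜ.Adj x y ↔ x ≠ y ∧ ¬ G.Adj x y := Iff.rfl
        rcases hx with hx | hx <;> rcases hy with hy | hy
        · exact hstBX' hx hy hxy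
        · exact ⟨hxy, hemp x (hBX'X x hx) y (hBY'Y y hy)⟩
        · exact ⟨hxy, fun h => (hemp y (hBX'X y hy) x (hBY'Y x hx)) h.symm⟩
        · exact hstBY' hx hy hxy
      have hcardU : ((BX' ∪ BY').card : ℝ) = (BX.card : ℝ) + BY.card := by
        rw [Finset.card_union_of_disjoint hdB]
        rw [← e3, ← e4]; push_cast; ring
      rcases le_total (AX.card : ℝ) (AY.card : ℝ) with ha | ha
      · refine ⟨AY', BX' ∪ BY', hclAY', hstU, ?_⟩
        rw [hcardU, e2]
        have h5 : (AX.card:ℝ)*BX.card + (AY.card:ℝ)*BY.card ≤ (AY.card:ℝ)*((BX.card:ℝ)+BY.card) := by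
          nlinarith [mul_nonneg hbx0 (sub_nonneg.mpr ha)]
        linarith
      · refine ⟨AX', BX' ∪ BY', hclAX', hstU, ?_⟩
        rw [hcardU, e1]
        have h5 : (AX.card:ℝ)*BX.card + (AY.card:ℝ)*BY.card ≤ (AX.card:ℝ)*((BX.card:ℝ)+BY.card) := by
          nlinarith [mul_nonneg hby0 (sub_nonneg.mpr ha)]
        linarith

private lemma rpow_log_div {x : ℝ} (hx : 1 < x) : x ^ (Real.log 2 / Real.log x) = 2 := by
  rw [Real.rpow_def_of_pos (lt_trans one_pos hx)]
  rw [mul_comm, div_mul_cancel₀ _ (ne_of_gt (Real.log_pos hx))]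
  exact Real.exp_log two_pos

private lemma homog_two {n : ℕ} (hn : 2 ≤ n) (G : SimpleGraph (Fin n)) :
    ∃ s : Finset (Fin n), (G.IsClique s ∨ Gᶜ.IsClique s) ∧ s.card = 2 := by
  by_cases hadj : ∃ x y, G.Adj x y
  · obtain ⟨x, y, hxy⟩ := hadj
    refine ⟨{x, y}, Or.inl ?_, Finset.card_pair hxy.ne⟩
    intro a ha b hb hab
    simp only [Finset.coe_insert, Set.mem_insert_iff, Finset.coe_singleton,
      Set.mem_singleton_iff] at ha hb
    rcases ha with rfl | rfl <;> rcases hb with rfl | rfl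
    · exact absurd rfl hab
    · exact hxy
    · exact hxy.symm
    · exact absurd rfl hab
  · push_neg at hadj
    have h01 : (⟨0, by omega⟩ : Fin n) ≠ ⟨1, by omega⟩ := by
      simp [Fin.ext_iff]
    refine ⟨{⟨0, by omega⟩, ⟨1, by omega⟩}, Or.inr ?_, Finset.card_pair h01⟩
    intro a _ b _ hab
    exact ⟨hab, hadj a b⟩

/-- If a hereditary class `C` of graphs has the strong Erdős–Hajnal
property (for some `c > 0` and all sufficiently large `n`, every `n`-vertex graph of
`C` has a complete or empty `⌈cn⌉`-bipartite pair), then `C` has the Erdős–Hajnal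
property: there is `c'' > 0` such that every `n`-vertex graph of `C` has a clique or a
stable set of size at least `n ^ c''`. -/
theorem stmt7 (C : ∀ n : ℕ, SimpleGraph (Fin n) → Prop)
    (hher : ∀ (n m : ℕ) (G : SimpleGraph (Fin n)) (H : SimpleGraph (Fin m)),
      C n G → Nonempty (H ↪g G) → C m H)
    (hSEH : ∃ c : ℝ, 0 < c ∧ ∃ N : ℕ, ∀ n ≥ N, ∀ G : SimpleGraph (Fin n), C n G →
      ∃ X Y : Finset (Fin n), Disjoint X Y ∧
        X.card = ⌈c * n⌉₊ ∧ Y.card = ⌈c * n⌉₊ ∧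
        ((∀ x ∈ X, ∀ y ∈ Y, G.Adj x y) ∨ (∀ x ∈ X, ∀ y ∈ Y, ¬ G.Adj x y))) :
    ∃ c'' : ℝ, 0 < c'' ∧ ∀ (n : ℕ) (G : SimpleGraph (Fin n)), C n G →
      ∃ s : Finset (Fin n), (G.IsClique s ∨ Gᶜ.IsClique s) ∧
        (n : ℝ) ^ c'' ≤ (s.card : ℝ) := by
  obtain ⟨c0, hc0, N, hSEH0⟩ := hSEH
  set c : ℝ := min c0 (1/4) with hcdef
  have hc : 0 < c := lt_min hc0 (by norm_num)
  have hc4 : c ≤ 1/4 := min_le_right _ _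
  set N0 : ℕ := max N 2 with hN0def
  have hN02 : 2 ≤ N0 := le_max_right _ _
  have hN01 : 1 ≤ N0 := by omega
  have hSEH' : ∀ n : ℕ, N0 < n → ∀ G : SimpleGraph (Fin n), C n G →
      ∃ X Y : Finset (Fin n), Disjoint X Y ∧
        X.card = ⌈c * n⌉₊ ∧ Y.card = ⌈c * n⌉₊ ∧
        ((∀ x ∈ X, ∀ y ∈ Y, G.Adj x y) ∨ (∀ x ∈ X, ∀ y ∈ Y, ¬ G.Adj x y)) := by
    intro n hn G hCG
    have hnN : n ≥ N := le_of_lt (lt_of_le_of_lt (le_max_left _ _) hn)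
    obtain ⟨X, Y, hd, hX, hY, hcase⟩ := hSEH0 n hnN G hCG
    have hcc : c * (n:ℝ) ≤ c0 * n := by
      apply mul_le_mul_of_nonneg_right (min_le_left _ _) (by positivity)
    have hleX : ⌈c * (n:ℝ)⌉₊ ≤ X.card := by rw [hX]; exact Nat.ceil_le_ceil hcc
    have hleY : ⌈c * (n:ℝ)⌉₊ ≤ Y.card := by rw [hY]; exact Nat.ceil_le_ceil hcc
    obtain ⟨X', hX'sub, hX'⟩ := Finset.exists_subset_card_eq hleX
    obtain ⟨Y', hY'sub, hY'⟩ := Finset.exists_subset_card_eq hleY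
    refine ⟨X', Y', hd.mono hX'sub hY'sub, hX', hY', ?_⟩
    rcases hcase with h | h
    · exact Or.inl (fun x hx y hy => h x (hX'sub hx) y (hY'sub hy))
    · exact Or.inr (fun x hx y hy => h x (hX'sub hx) y (hY'sub hy))
  have hcinv : 1 < c⁻¹ := one_lt_inv₀ hc |>.mpr (by linarith)
  have hlogc : 0 < Real.log c⁻¹ := Real.log_pos hcinv
  set t : ℝ := Real.log 2 / (2 * Real.log c⁻¹) with htdef
  have ht : 0 < t := div_pos (Real.log_pos one_lt_two) (by positivity)
  have hct : c⁻¹ ^ (2 * t) = 2 := by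
    rw [Real.rpow_def_of_pos (by positivity)]
    have : Real.log c⁻¹ * (2 * t) = Real.log 2 := by
      rw [htdef,
        show Real.log c⁻¹ * (2 * (Real.log 2 / (2 * Real.log c⁻¹)))
          = Real.log 2 * ((2 * Real.log c⁻¹) / (2 * Real.log c⁻¹)) from by ring,
        div_self (by positivity), mul_one]
    rw [this, Real.exp_log two_pos]
  have key := key_lemma C hher c hc N0 hN01 hSEH' t ht hct
  have hN0R : (1:ℝ) < (N0:ℝ)^2 := by
    have : (2:ℝ) ≤ (N0:ℝ) := by exact_mod_cast hN02
    nlinarith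
  have hlogN : 0 < Real.log ((N0:ℝ)^2) := Real.log_pos hN0R
  refine ⟨min (t/2) (Real.log 2 / Real.log ((N0:ℝ)^2)),
    lt_min (by positivity) (div_pos (Real.log_pos one_lt_two) hlogN), ?_⟩
  set c'' : ℝ := min (t/2) (Real.log 2 / Real.log ((N0:ℝ)^2)) with hc''def
  have hc''pos : 0 < c'' := lt_min (by positivity) (div_pos (Real.log_pos one_lt_two) hlogN)
  intro n G hCG
  rcases Nat.eq_zero_or_pos n with rfl | hn1
  · refine ⟨∅, Or.inl (by simp), ?_⟩
    simp [Real.zero_rpow (ne_of_gt hc''pos)]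
  rcases Nat.lt_or_ge n 2 with hn2 | hn2
  · -- n = 1
    have : n = 1 := by omega
    subst this
    refine ⟨{⟨0, by omega⟩}, Or.inl (by simp), ?_⟩
    simp [Real.one_rpow]
  rcases le_or_gt n (N0^2) with hnsmall | hnbig
  · -- 2 ≤ n ≤ N0².  A homogeneous pair suffices.
    obtain ⟨s, hs, hcard⟩ := homog_two hn2 G
    refine ⟨s, hs, ?_⟩
    rw [hcard]
    have h1 : (n:ℝ) ^ c'' ≤ ((N0:ℝ)^2) ^ c'' := by
      apply Real.rpow_le_rpow (by positivity) _ hc''pos.le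
      have hcast : ((n:ℕ):ℝ) ≤ ((N0^2 : ℕ):ℝ) := by exact_mod_cast hnsmall
      push_cast at hcast; linarith
    have h2 : ((N0:ℝ)^2) ^ c'' ≤ ((N0:ℝ)^2) ^ (Real.log 2 / Real.log ((N0:ℝ)^2)) :=
      Real.rpow_le_rpow_of_exponent_le hN0R.le (min_le_right _ _)
    rw [rpow_log_div hN0R] at h2
    push_cast
    linarith
  · -- n > N0²
    obtain ⟨A, B, hA, hB, hp⟩ := key n G hCG
    have hN0pos : (0:ℝ) < N0 := by exact_mod_cast hN01
    have hnpos : (0:ℝ) < (n:ℝ)/N0 := by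
      apply div_pos _ hN0pos; exact_mod_cast hn1
    have hsq : ((N0:ℝ))^2 < (n:ℝ) := by exact_mod_cast hnbig
    have hmain : ∀ M : ℝ, (A.card:ℝ) ≤ M → (B.card:ℝ) ≤ M → 0 ≤ M → (n:ℝ)^c'' ≤ M := by
      intro M h1 h2 h0
      have hb0 : (0:ℝ) ≤ B.card := by positivity
      have hMM : ((n:ℝ)/N0)^(2*t) ≤ M*M := le_trans hp (mul_le_mul h1 h2 hb0 h0)
      have e : ((n:ℝ)/N0)^(2*t) = ((n:ℝ)/N0)^t * ((n:ℝ)/N0)^t := by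
        rw [two_mul, Real.rpow_add hnpos]
      have hMt : ((n:ℝ)/N0)^t ≤ M := by nlinarith [Real.rpow_pos_of_pos hnpos t]
      have hsqrtle : Real.sqrt n ≤ (n:ℝ)/N0 := by
        have hs2 : (N0:ℝ) ≤ Real.sqrt n := (Real.le_sqrt (by positivity) (by positivity)).mpr hsq.le
        rw [le_div_iff₀ hN0pos]
        calc Real.sqrt n * N0 ≤ Real.sqrt n * Real.sqrt n :=
              mul_le_mul_of_nonneg_left hs2 (Real.sqrt_nonneg _)
          _ = n := Real.mul_self_sqrt (by positivity)
      have h3 : (n:ℝ)^(t/2) ≤ ((n:ℝ)/N0)^t := by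
        have hrw : (n:ℝ)^(t/2) = (Real.sqrt n)^t := by
          rw [Real.sqrt_eq_rpow, ← Real.rpow_mul (by positivity)]
          ring_nf
        rw [hrw]
        exact Real.rpow_le_rpow (Real.sqrt_nonneg _) hsqrtle ht.le
      have h4 : (n:ℝ)^c'' ≤ (n:ℝ)^(t/2) := by
        apply Real.rpow_le_rpow_of_exponent_le _ (min_le_left _ _)
        exact_mod_cast hn1
      linarith
    rcases le_total (A.card : ℝ) (B.card : ℝ) with hab | hab
    · exact ⟨B, Or.inr hB, hmain B.card hab le_rfl (by positivity)⟩
    · exact ⟨A, Or.inl hA, hmain A.card le_rfl hab (by positivity)⟩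
end

section
/- Let G be a connected graph with a spanning dominating construction as follows: a rooted subtree T of G built by the stack algorithm (maintaining an induced path from the root as the stack, adding a vertex y adjacent only to the top of the stack among stack vertices, when y has a neighbor outside the closed neighborhood of T). Then at every step of the algorithm, the set of vertices currently in the stack induces a path in G starting at the root. -/
/-- invariant of the stack algorithm.  At every step of the stack
algorithm the stack induces a path of `G` starting at the root `r`.  Popping
trivially preserves this, so the content is the push step: if the current stack is an
induced path `p : pathGraph (m+1) ↪g G` starting at `r` (an embedding of the path
graph is exactly an induced path), and the pushed vertex `y` is adjacent, among the
stack vertices, exactly to the top `p (Fin.last m)`, then the new stack is again an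
induced path starting at `r`: there is an embedding `q : pathGraph (m+2) ↪g G`
extending `p` with `q 0 = r` and last vertex `y`. -/
theorem stmt14 {V : Type*} (G : SimpleGraph V) (r : V) (m : ℕ)
    (p : SimpleGraph.pathGraph (m + 1) ↪g G) (hp0 : p 0 = r)
    (y : V) (hy : ∀ i : Fin (m + 1), y ≠ p i)
    (hadj : ∀ i : Fin (m + 1), G.Adj y (p i) ↔ i = Fin.last m) :
    ∃ q : SimpleGraph.pathGraph (m + 2) ↪g G,
      q 0 = r ∧ (∀ i : Fin (m + 1), q i.castSucc = p i) ∧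
      q (Fin.last (m + 1)) = y := by
  classical
  set f : Fin (m + 2) → V := Fin.lastCases y (fun i => p i) with hf
  have hf_cast : ∀ i : Fin (m + 1), f i.castSucc = p i := fun i => by
    simp [hf]
  have hf_last : f (Fin.last (m + 1)) = y := by simp [hf]
  have hinj : Function.Injective f := by
    intro a b hab
    induction a using Fin.lastCases with
    | last =>
      induction b using Fin.lastCases with
      | last => rfl
      | cast j =>
        rw [hf_last, hf_cast] at hab
        exact absurd hab (hy j)
    | cast i =>
      induction b using Fin.lastCases with
      | last =>
        rw [hf_last, hf_cast] at hab
        exact absurd hab.symm (hy i)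
      | cast j =>
        rw [hf_cast, hf_cast] at hab
        exact congrArg Fin.castSucc (p.injective hab)
  have hadj' : ∀ a b : Fin (m + 2), G.Adj (f a) (f b) ↔
      (SimpleGraph.pathGraph (m + 2)).Adj a b := by
    intro a b
    induction a using Fin.lastCases with
    | last =>
      induction b using Fin.lastCases with
      | last => simp [SimpleGraph.pathGraph_adj]
      | cast j =>
        rw [hf_last, hf_cast, hadj j, SimpleGraph.pathGraph_adj]
        constructor
        · intro h
          right
          simp [Fin.ext_iff] at h ⊢
          omega
        · intro h
          simp [Fin.ext_iff] at h ⊢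
          omega
    | cast i =>
      induction b using Fin.lastCases with
      | last =>
        rw [hf_cast, hf_last, G.adj_comm, hadj i, SimpleGraph.pathGraph_adj]
        constructor
        · intro h
          left
          simp [Fin.ext_iff] at h ⊢
          omega
        · intro h
          simp [Fin.ext_iff] at h ⊢
          omega
      | cast j =>
        rw [hf_cast, hf_cast, p.map_adj_iff, SimpleGraph.pathGraph_adj,
          SimpleGraph.pathGraph_adj]
        simp
  refine ⟨⟨⟨f, hinj⟩, hadj' _ _⟩, ?_, ?_, ?_⟩
  · show f 0 = r
    have : (0 : Fin (m + 2)) = (0 : Fin (m + 1)).castSucc := by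
      simp [Fin.ext_iff]
    rw [this, hf_cast, hp0]
  · exact hf_cast
  · exact hf_last
end

section
/- Let T be a rooted tree obtained from the stack algorithm on a connected graph G, and for each vertex v of G let r(v) be the root of the closed neighborhood of v intersected with T (the minimal-in-deletion-order element among the descendance-minimal elements). If xy is an edge of G, then r(x) and r(y) are related in T (one is an ancestor of the other). -/
/-- A run of the stack algorithm on a connected graph `G` with root `r`, recorded by
the output tree `T` together with, for every node `t ∈ T`, its addition time `a t`
(when `t` was pushed on the stack) and its deletion time `d t` (when `t` was popped,
giving the deletion order).  A node `u ∈ T` is an ancestor of `v ∈ T` exactly when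
the stack interval of `v` is nested in that of `u`.  The fields record the
properties guaranteed by the algorithm: the root is pushed first and popped last,
every node is pushed before it is popped, times are distinct, stack intervals are
laminar (nested or disjoint), every non-root node is pushed while adjacent to the
current top of the stack, and a node is popped only when no active vertex has it as
its unique neighbour on the stack. -/
structure StackAlgRun (V : Type*) [Fintype V] [DecidableEq V] where
  G : SimpleGraph V
  conn : G.Connected
  r : V
  T : Finset V
  a : V → ℕ
  d : V → ℕ
  root_mem : r ∈ T
  a_lt_d : ∀ t ∈ T, a t < d t
  root_first : ∀ t ∈ T, a r ≤ a t ∧ d t ≤ d r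
  a_inj : ∀ t ∈ T, ∀ u ∈ T, a t = a u → t = u
  d_inj : ∀ t ∈ T, ∀ u ∈ T, d t = d u → t = u
  laminar : ∀ u ∈ T, ∀ v ∈ T, a u ≤ a v → d v ≤ d u ∨ d u < a v
  parent_adj : ∀ v ∈ T, v ≠ r → ∃ u ∈ T, G.Adj u v ∧ a u < a v ∧ d v ≤ d u
  dominating : ∀ x : V, x ∈ T ∨ ∃ t ∈ T, G.Adj x t
  pop_sound : ∀ t ∈ T, ¬ ∃ y : V,
    (∀ _hy : y ∈ T, d t < a y) ∧                     -- y is not yet in the tree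
    (∃ u ∈ T, a u ≤ d t ∧ G.Adj y u) ∧              -- y is in the neighbourhood of T
    (∃ z : V, G.Adj y z ∧                            -- y is active: a neighbour z
      ∀ u ∈ T, a u ≤ d t → z ≠ u ∧ ¬ G.Adj z u) ∧   -- outside the closed nbhd of T
    G.Adj y t ∧                                      -- t is a neighbour of y, and is
    (∀ u ∈ T, a u ≤ d t → d t ≤ d u → G.Adj y u → u = t)  -- the only one on the stack

variable {V : Type*} [Fintype V] [DecidableEq V]

/-- `u` is an ancestor of `v` in the tree of the run (descendance order). -/
def StackAlgRun.Anc (S : StackAlgRun V) (u v : V) : Prop :=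
  S.a u ≤ S.a v ∧ S.d v ≤ S.d u

/-- Two nodes are related if one is an ancestor of the other. -/
def StackAlgRun.Related (S : StackAlgRun V) (u v : V) : Prop :=
  S.Anc u v ∨ S.Anc v u

/-- `u = R(N)` is the root of a set `N` of nodes of the tree: it belongs to `N`, it is
minimal in `N` for the descendance order, and among the descendance-minimal elements
of `N` it is the first one in the deletion order. -/
def StackAlgRun.IsRootOf (S : StackAlgRun V) (N : Finset V) (u : V) : Prop :=
  u ∈ N ∧ (∀ t ∈ N, S.Anc t u → t = u) ∧
    ∀ t ∈ N, (∀ t' ∈ N, S.Anc t' t → t' = t) → S.d u ≤ S.d t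

open Classical

/-- If `w` is the root of `N ⊆ T`, then every element of `N` is either a descendant
of `w` or is added only after `w` is deleted. -/
lemma StackAlgRun.root_spec (S : StackAlgRun V) {N : Finset V} (hN : N ⊆ S.T) {w : V}
    (hw : S.IsRootOf N w) : ∀ t ∈ N, S.Anc w t ∨ S.d w < S.a t := by
  intro t ht
  obtain ⟨hwN, hwmin, hwfirst⟩ := hw
  -- pick a minimal ancestor `m` of `t` inside `N`
  obtain ⟨m, hmA, hmle⟩ := Finset.exists_min_image (N.filter fun t' => S.Anc t' t)
    S.a ⟨t, Finset.mem_filter.mpr ⟨ht, le_rfl, le_rfl⟩⟩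
  rw [Finset.mem_filter] at hmA
  obtain ⟨hmN, hmt⟩ := hmA
  have hmmin : ∀ t' ∈ N, S.Anc t' m → t' = m := by
    intro t' ht' hanc
    have ht'A : t' ∈ N.filter fun t'' => S.Anc t'' t := by
      rw [Finset.mem_filter]
      exact ⟨ht', hanc.1.trans hmt.1, hmt.2.trans hanc.2⟩
    exact S.a_inj t' (hN ht') m (hN hmN) (le_antisymm hanc.1 (hmle t' ht'A))
  have hdwm : S.d w ≤ S.d m := hwfirst m hmN hmmin
  by_cases hmw : m = w
  · exact Or.inl (hmw ▸ hmt)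
  · rcases le_total (S.a w) (S.a m) with hle | hle
    · rcases S.laminar w (hN hwN) m (hN hmN) hle with hc | hc
      · exact absurd (S.d_inj m (hN hmN) w (hN hwN) (le_antisymm hc hdwm)) hmw
      · exact Or.inr (lt_of_lt_of_le hc hmt.1)
    · rcases S.laminar m (hN hmN) w (hN hwN) hle with hc | hc
      · exact absurd (hwmin m hmN ⟨hle, hc⟩) hmw
      · exact absurd hc (not_lt.mpr ((S.a_lt_d w (hN hwN)).le.trans hdwm))

/-- The asymmetric core of statement 18: the intervals of `r(x)` and `r(y)` cannot be
disjoint, with the interval of `r(x)` coming first. -/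
lemma StackAlgRun.key (S : StackAlgRun V) (x y : V) (hxy : S.G.Adj x y) (rx ry : V)
    (hrx : S.IsRootOf (S.T.filter fun t => t = x ∨ S.G.Adj x t) rx)
    (hry : S.IsRootOf (S.T.filter fun t => t = y ∨ S.G.Adj y t) ry)
    (h : S.d rx < S.a ry) : False := by
  set Nx := S.T.filter fun t => t = x ∨ S.G.Adj x t with hNxdef
  set Ny := S.T.filter fun t => t = y ∨ S.G.Adj y t with hNydef
  have hNxT : Nx ⊆ S.T := Finset.filter_subset _ _
  have hNyT : Ny ⊆ S.T := Finset.filter_subset _ _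
  have hrxT : rx ∈ S.T := hNxT hrx.1
  have hryT : ry ∈ S.T := hNyT hry.1
  have hNxspec := S.root_spec hNxT hrx
  have hNyspec := S.root_spec hNyT hry
  -- every element of Ny is added after time `d rx`
  have hNylate : ∀ t ∈ Ny, S.d rx < S.a t := by
    intro t ht
    rcases hNyspec t ht with hc | hc
    · exact h.trans_le hc.1
    · exact h.trans ((S.a_lt_d ry hryT).trans hc)
  -- x is not rx
  have hxrx : x ≠ rx := by
    intro hx
    have hxT : x ∈ S.T := hx ▸ hrxT
    have hxNy : x ∈ Ny := by
      rw [hNydef, Finset.mem_filter]; exact ⟨hxT, Or.inr hxy.symm⟩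
    have := hNylate x hxNy
    rw [← hx] at *
    exact absurd (S.a_lt_d x hxT) (not_lt.mpr ((hx ▸ this).le))
  have hadjxrx : S.G.Adj x rx := by
    have := hrx.1
    rw [hNxdef, Finset.mem_filter] at this
    rcases this.2 with hc | hc
    · exact absurd hc.symm hxrx
    · exact hc
  refine S.pop_sound rx hrxT ⟨x, ?_, ⟨rx, hrxT, (S.a_lt_d rx hrxT).le, hadjxrx⟩, ?_, hadjxrx, ?_⟩
  · -- x is not yet in the tree
    intro hxT
    have hxNy : x ∈ Ny := by
      rw [hNydef, Finset.mem_filter]; exact ⟨hxT, Or.inr hxy.symm⟩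
    exact hNylate x hxNy
  · -- x is active thanks to its neighbour y
    refine ⟨y, hxy, fun u huT hu => ?_⟩
    constructor
    · intro hyu
      have : u ∈ Ny := by rw [hNydef, Finset.mem_filter]; exact ⟨huT, Or.inl hyu.symm⟩
      exact absurd hu (not_le.mpr (hNylate u this))
    · intro hyadj
      have : u ∈ Ny := by rw [hNydef, Finset.mem_filter]; exact ⟨huT, Or.inr hyadj⟩
      exact absurd hu (not_le.mpr (hNylate u this))
  · -- rx is the only neighbour of x on the stack
    intro u huT hau hdu hadj
    have huNx : u ∈ Nx := by rw [hNxdef, Finset.mem_filter]; exact ⟨huT, Or.inr hadj⟩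
    rcases hNxspec u huNx with hc | hc
    · exact S.d_inj u huT rx hrxT (le_antisymm hc.2 hdu)
    · exact absurd hau (not_le.mpr hc)

open Classical in
/-- key lemma.  For a vertex `x` of `G`, `r(x)` is the root of
`N̄(x) ∩ T`, the closed neighbourhood of `x` intersected with the tree (well defined
since `T` dominates `G`).  If `xy` is an edge of `G` then `r(x)` and `r(y)` are
related: one is an ancestor of the other. -/
theorem stmt18 (S : StackAlgRun V) (x y : V) (hxy : S.G.Adj x y) (rx ry : V)
    (hrx : S.IsRootOf (S.T.filter fun t => t = x ∨ S.G.Adj x t) rx)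
    (hry : S.IsRootOf (S.T.filter fun t => t = y ∨ S.G.Adj y t) ry) :
    S.Related rx ry := by
  have hrxT : rx ∈ S.T := (Finset.filter_subset _ _) hrx.1
  have hryT : ry ∈ S.T := (Finset.filter_subset _ _) hry.1
  rcases le_total (S.a rx) (S.a ry) with hle | hle
  · rcases S.laminar rx hrxT ry hryT hle with hc | hc
    · exact Or.inl ⟨hle, hc⟩
    · exact absurd hc (fun hc => S.key x y hxy rx ry hrx hry hc)
  · rcases S.laminar ry hryT rx hrxT hle with hc | hc
    · exact Or.inr ⟨hle, hc⟩
    · exact absurd hc (fun hc => S.key y x hxy.symm ry rx hry hrx hc)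
end

section
/- Let G be a connected graph on n vertices with no induced cycle of length at least k, with maximum degree at most εn, where ε and δ are small enough in terms of k (e.g. kε ≤ δ and δ < 1/100). Then G contains two disjoint vertex sets X, Y, each of size at least cn for some c = c(k, ε) > 0, with no edges between X and Y, provided n is sufficiently large. -/
set_option maxHeartbeats 1000000
set_option linter.unusedSectionVars false

open SimpleGraph Finset

open scoped Classical

section Machinery

variable {V : Type} [Fintype V] [DecidableEq V] (G : SimpleGraph V)

def Anti (A B : Finset V) : Prop := ∀ a ∈ A, ∀ b ∈ B, ¬ G.Adj a b

def GoodPair (t : ℕ) : Prop :=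
  ∃ X Y : Finset V, Disjoint X Y ∧ t ≤ X.card ∧ t ≤ Y.card ∧ Anti G X Y

inductive Rch (S : Finset V) : V → V → Prop
  | refl (x : V) (hx : x ∈ S) : Rch S x x
  | tail {x y z : V} : Rch S x y → G.Adj y z → z ∈ S → Rch S x z

variable {G}

lemma Rch.mem_left {S : Finset V} {x y : V} (h : Rch G S x y) : x ∈ S := by
  induction h with
  | refl hx => exact hx
  | tail _ _ _ ih => exact ih

lemma Rch.mem_right {S : Finset V} {x y : V} (h : Rch G S x y) : y ∈ S := by
  induction h with
  | refl hx => exact hx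
  | tail _ _ hz _ => exact hz

lemma Rch.trans' {S : Finset V} {x y z : V} (h1 : Rch G S x y) (h2 : Rch G S y z) :
    Rch G S x z := by
  induction h2 with
  | refl _ => exact h1
  | tail _ hadj hz ih => exact Rch.tail ih hadj hz

lemma Rch.symm' {S : Finset V} {x y : V} (h : Rch G S x y) : Rch G S y x := by
  induction h with
  | refl hx => exact Rch.refl _ hx
  | tail h hadj hz ih =>
      exact Rch.trans' (Rch.tail (Rch.refl _ hz) hadj.symm h.mem_right) ih

lemma Rch.mono {S T : Finset V} (hST : S ⊆ T) {x y : V} (h : Rch G S x y) :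
    Rch G T x y := by
  induction h with
  | refl hx => exact Rch.refl _ (hST hx)
  | tail _ hadj hz ih => exact Rch.tail ih hadj (hST hz)

variable (G)

noncomputable def classOf (S : Finset V) (x : V) : Finset V := S.filter (fun y => Rch G S x y)

variable {G}

lemma classOf_subset {S : Finset V} {x : V} : classOf G S x ⊆ S := Finset.filter_subset _ _

lemma mem_classOf_self {S : Finset V} {x : V} (hx : x ∈ S) : x ∈ classOf G S x := by
  simp [classOf, hx, Rch.refl x hx]

lemma classOf_closed {S : Finset V} {x y z : V} (hy : y ∈ classOf G S x)
    (hadj : G.Adj y z) (hz : z ∈ S) : z ∈ classOf G S x := by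
  simp only [classOf, Finset.mem_filter] at hy ⊢
  exact ⟨hz, Rch.tail hy.2 hadj hz⟩

lemma anti_classOf_compl {S : Finset V} {x : V} {a b : V} (ha : a ∈ S) (hna : a ∉ classOf G S x)
    (hb : b ∈ classOf G S x) : ¬ G.Adj a b :=
  fun h => hna (classOf_closed hb h.symm ha)

lemma rch_classOf {S : Finset V} {x y : V} (h : Rch G S x y) :
    Rch G (classOf G S x) x y := by
  induction h with
  | refl hx => exact Rch.refl _ (mem_classOf_self hx)
  | tail h hadj hz ih =>
      exact Rch.tail ih hadj (by
        simp only [classOf, Finset.mem_filter]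
        exact ⟨hz, Rch.tail h hadj hz⟩)

lemma classOf_conn {S : Finset V} {x : V} {y z : V} (hy : y ∈ classOf G S x)
    (hz : z ∈ classOf G S x) : Rch G (classOf G S x) y z := by
  simp only [classOf, Finset.mem_filter] at hy hz
  exact Rch.trans' (Rch.symm' (rch_classOf hy.2)) (rch_classOf hz.2)

/-- extract a union of classes of weight in `[t, 2t)`. -/
lemma extract_block_aux (t : ℕ) (ht : 1 ≤ t) : ∀ (N : ℕ) (S : Finset V), S.card ≤ N →
    (∀ x ∈ S, (classOf G S x).card < t) → t ≤ S.card →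
    ∃ X ⊆ S, t ≤ X.card ∧ X.card < 2 * t ∧
      (∀ a ∈ X, ∀ b ∈ S, G.Adj a b → b ∈ X) := by
  intro N
  induction N with
  | zero =>
      intro S hN hsmall hle
      exact absurd hle (by omega)
  | succ N ih =>
  intro S hN hsmall hle
  have hS0 : S.Nonempty := Finset.card_pos.mp (by omega)
  obtain ⟨x, hx⟩ := hS0
  set K := classOf G S x with hK
  have hKsub : K ⊆ S := classOf_subset
  have hKcard : K.card < t := hsmall x hx
  by_cases hbig : S.card - K.card < t
  · refine ⟨S, Finset.Subset.refl _, hle, ?_, fun a _ b hb _ => hb⟩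
    have := Finset.card_sdiff_add_card_eq_card hKsub
    omega
  · push_neg at hbig
    set S' := S \ K with hS'
    have hS'card : S'.card = S.card - K.card := Finset.card_sdiff_of_subset hKsub
    have hxK : x ∈ K := mem_classOf_self hx
    have hlt : S'.card < S.card := by
      have : K.Nonempty := ⟨x, hxK⟩
      have := Finset.card_pos.mpr this
      omega
    have hsub' : S' ⊆ S := Finset.sdiff_subset
    have hclass' : ∀ y ∈ S', (classOf G S' y).card < t := by
      intro y hy
      refine lt_of_le_of_lt (Finset.card_le_card ?_) (hsmall y (hsub' hy))
      intro z hz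
      simp only [classOf, Finset.mem_filter] at hz ⊢
      exact ⟨hsub' hz.1, Rch.mono hsub' hz.2⟩
    obtain ⟨X, hXsub, h1, h2, hcl⟩ := ih S' (by omega) hclass' (by omega)
    refine ⟨X, hXsub.trans hsub', h1, h2, ?_⟩
    intro a ha b hb hadj
    by_cases hbK : b ∈ K
    · exfalso
      have haS' : a ∈ S' := hXsub ha
      have : a ∈ K := classOf_closed hbK hadj.symm (hsub' haS')
      rw [hS'] at haS'
      exact (Finset.mem_sdiff.mp haS').2 this
    · exact hcl a ha b (Finset.mem_sdiff.mpr ⟨hb, hbK⟩) hadj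

lemma extract_block (t : ℕ) (ht : 1 ≤ t) (S : Finset V)
    (hsmall : ∀ x ∈ S, (classOf G S x).card < t) (hle : t ≤ S.card) :
    ∃ X ⊆ S, t ≤ X.card ∧ X.card < 2 * t ∧
      (∀ a ∈ X, ∀ b ∈ S, G.Adj a b → b ∈ X) :=
  extract_block_aux t ht S.card S le_rfl hsmall hle

lemma grouping (t : ℕ) (ht : 1 ≤ t) (S : Finset V)
    (hsmall : ∀ x ∈ S, (classOf G S x).card < t) (hle : 3 * t ≤ S.card) :
    GoodPair G t := by
  obtain ⟨X, hXsub, h1, h2, hcl⟩ := extract_block t ht S hsmall (by omega)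
  refine ⟨X, S \ X, Finset.disjoint_sdiff, h1, ?_, ?_⟩
  · have := Finset.card_sdiff_add_card_eq_card hXsub
    omega
  · intro a ha b hb hadj
    exact (Finset.mem_sdiff.mp hb).2 (hcl a ha b (Finset.mem_sdiff.mp hb).1 hadj)

end Machinery

open SimpleGraph Finset

private lemma modHelp {L a : ℕ} (h1 : 1 ≤ a) (h2 : a < 2 * L) :
    a % L = if a < L then a else a - L := by
  split
  · exact Nat.mod_eq_of_lt ‹_›
  · rw [Nat.mod_eq_sub_mod (by omega)]
    exact Nat.mod_eq_of_lt (by omega)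

lemma cycAdj {L : ℕ} (hL : 4 ≤ L) (u v : Fin L) :
    (SimpleGraph.cycleGraph L).Adj u v ↔
      (u.val + 1 = v.val ∨ v.val + 1 = u.val ∨ (u.val = 0 ∧ v.val + 1 = L) ∨ (v.val = 0 ∧ u.val + 1 = L)) := by
  rw [SimpleGraph.cycleGraph_adj']
  have hu := u.isLt; have hv := v.isLt
  simp only [Fin.sub_def]
  rw [modHelp (by omega) (by omega), modHelp (by omega) (by omega)]
  split <;> split <;> omega

lemma holeBuilder {V : Type} [Fintype V] [DecidableEq V] (G : SimpleGraph V)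
    (k : ℕ) (hk : 4 ≤ k)
    (hholes : ∀ l, k ≤ l → IsEmpty (SimpleGraph.cycleGraph l ↪g G))
    (L : ℕ) (hL : k ≤ L) (q : ℕ → V)
    (hinj : ∀ i < L, ∀ j < L, q i = q j → i = j)
    (hadj : ∀ i, i + 1 < L → G.Adj (q i) (q (i+1)))
    (hlast : G.Adj (q (L-1)) (q 0))
    (hnon : ∀ i j, i < L → j < L → i + 1 < j → ¬(i = 0 ∧ j = L - 1) → ¬ G.Adj (q i) (q j)) :
    False := by
  have hL4 : 4 ≤ L := le_trans hk hL
  refine (hholes L hL).elim ?_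
  refine RelEmbedding.mk ⟨fun i => q i.val, ?_⟩ ?_
  · intro a b hab
    exact Fin.ext (hinj _ a.isLt _ b.isLt hab)
  · intro a b
    change G.Adj (q a.val) (q b.val) ↔ _
    rw [cycAdj hL4]
    constructor
    · intro hadj'
      have hne : a.val ≠ b.val := by
        intro h
        have : a = b := Fin.ext h
        subst this; exact G.loopless.irrefl _ hadj'
      by_contra hcon
      push_neg at hcon
      obtain ⟨h1, h2, h3, h4⟩ := hcon
      rcases lt_or_gt_of_ne hne with h | h
      · exact hnon a.val b.val a.isLt b.isLt (by omega) (by omega) hadj'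
      · exact hnon b.val a.val b.isLt a.isLt (by omega) (by omega) hadj'.symm
    · rintro (h | h | h | h)
      · have := hadj a.val (by omega); rwa [h] at this
      · have := hadj b.val (by omega); rw [h] at this; exact this.symm
      · have hb : b.val = L - 1 := by omega
        rw [hb, h.1]; exact hlast.symm
      · have ha : a.val = L - 1 := by omega
        rw [ha, h.1]; exact hlast
section Part2

variable {V : Type} [Fintype V] [DecidableEq V] (G : SimpleGraph V)

noncomputable def Nb (p : ℕ → V) (m : ℕ) : Finset V :=
  Finset.univ.filter (fun v => ∃ i, i < m ∧ (v = p i ∨ G.Adj (p i) v))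

def IsIndPath (p : ℕ → V) (m : ℕ) : Prop :=
  (∀ i, i < m → ∀ j, j < m → p i = p j → i = j) ∧
  (∀ i, i + 1 < m → G.Adj (p i) (p (i+1))) ∧
  (∀ i j, j < m → i + 1 < j → ¬ G.Adj (p i) (p j))

variable {G}

lemma mem_Nb {p : ℕ → V} {m : ℕ} {v : V} :
    v ∈ Nb G p m ↔ ∃ i, i < m ∧ (v = p i ∨ G.Adj (p i) v) := by
  simp [Nb]

lemma stepCore (t : ℕ) (ht : 1 ≤ t) (T : Finset V) (q : V)
    (hTconn : ∀ a ∈ T, ∀ b ∈ T, Rch G T a b)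
    (hb0 : ∃ b0 ∈ T, (b0 = q ∨ G.Adj q b0)) :
    GoodPair G t ∨ (T.filter (fun x => ¬(x = q ∨ G.Adj q x))).card ≤ 3 * t ∨
    (∃ C' : Finset V, ∃ w : V,
       C' ⊆ T.filter (fun x => ¬(x = q ∨ G.Adj q x)) ∧ t ≤ C'.card ∧
       (∀ x ∈ C', ∀ y ∈ C', Rch G C' x y) ∧
       (∀ a ∈ T.filter (fun x => ¬(x = q ∨ G.Adj q x)), a ∉ C' → ∀ b ∈ C', ¬ G.Adj a b) ∧
       w ∈ T ∧ (w = q ∨ G.Adj q w) ∧ (∃ a' ∈ C', G.Adj a' w)) := by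
  classical
  set S := T.filter (fun x => ¬(x = q ∨ G.Adj q x)) with hSdef
  by_cases hS3 : S.card ≤ 3 * t
  · exact Or.inr (Or.inl hS3)
  by_cases hall : ∀ x ∈ S, (classOf G S x).card < t
  · exact Or.inl (grouping t ht S hall (by omega))
  push_neg at hall
  obtain ⟨x, hxS, hxc⟩ := hall
  set C' := classOf G S x with hC'def
  have hC'S : C' ⊆ S := classOf_subset
  have hST : S ⊆ T := Finset.filter_subset _ _
  obtain ⟨b0, hb0T, hb0cond⟩ := hb0
  have hb0S : b0 ∉ S := by
    intro h
    rw [hSdef] at h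
    exact (Finset.mem_filter.mp h).2 hb0cond
  obtain ⟨a, haC'⟩ : C'.Nonempty := Finset.card_pos.mp (by omega)
  have key : ∀ y, Rch G T a y → y ∈ C' ∨
      (∃ w ∈ T, (w = q ∨ G.Adj q w) ∧ ∃ a' ∈ C', G.Adj a' w) := by
    intro y hy
    induction hy with
    | refl _ => exact Or.inl haC'
    | tail hR hadj hz ih =>
        rename_i yy zz
        rcases ih with hyC' | found
        · by_cases hzS : zz ∈ S
          · exact Or.inl (classOf_closed hyC' hadj hzS)
          · right
            refine ⟨_, hz, ?_, _, hyC', hadj⟩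
            by_contra hcon
            exact hzS (by rw [hSdef]; exact Finset.mem_filter.mpr ⟨hz, hcon⟩)
        · exact Or.inr found
  rcases key b0 (hTconn a (hST (hC'S haC')) b0 hb0T) with h | ⟨w, hwT, hwq, ha'⟩
  · exact absurd (hC'S h) hb0S
  · refine Or.inr (Or.inr ⟨C', w, hC'S, by omega, ?_, ?_, hwT, hwq, ha'⟩)
    · intro x' hx' y' hy'
      exact classOf_conn hx' hy'
    · intro a' ha'S ha'n b hb
      exact anti_classOf_compl ha'S ha'n hb

lemma loopLemma (t : ℕ) (ht : 1 ≤ t) :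
    ∀ (N : ℕ) (C : Finset V) (m : ℕ) (p : ℕ → V) (D : Finset V),
    C.card ≤ N → 2 ≤ m → IsIndPath G p m →
    (∀ x ∈ C, ∀ i, i < m → x ≠ p i) →
    (∀ x ∈ C, ∀ i, i + 1 < m → ¬ G.Adj x (p i)) →
    (∃ w ∈ C, G.Adj (p (m-1)) w) →
    (∀ x ∈ C, ∀ y ∈ C, Rch G C x y) →
    (∀ v : V, v ∈ Nb G p m ∨ v ∈ C ∨ v ∈ D) →
    Anti G D C → Disjoint D C → D.card ≤ t →
    GoodPair G t ∨ ∃ (m' : ℕ) (p' : ℕ → V), 1 ≤ m' ∧ IsIndPath G p' m' ∧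
      (Finset.univ \ Nb G p' m').card ≤ 4 * t := by
  intro N
  induction N with
  | zero =>
      intro C m p D hN _ _ _ _ hlast _ _ _ _ _
      obtain ⟨w0, hw0, _⟩ := hlast
      have := Finset.card_pos.mpr ⟨w0, hw0⟩
      omega
  | succ N ih =>
  intro C m p D hN hm hpath hCP hCPanti hlast hCconn hcov hD hDdisj hDcard
  obtain ⟨hinj, hadj, hnon⟩ := hpath
  set q := p (m-1) with hqdef
  obtain ⟨w0, hw0C, hw0adj⟩ := hlast
  have hqC : ∀ x ∈ C, x ≠ q := fun x hx => hCP x hx (m-1) (by omega)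
  have hstep := stepCore t ht C q (by exact hCconn) ⟨w0, hw0C, Or.inr hw0adj⟩
  set S := C.filter (fun x => ¬(x = q ∨ G.Adj q x)) with hSdef
  have hw0S : w0 ∉ S := by
    intro h
    exact (Finset.mem_filter.mp h).2 (Or.inr hw0adj)
  have hSC : S ⊆ C := Finset.filter_subset _ _
  rcases hstep with hgood | hS3 | ⟨C', w, hC'S, hC'card, hC'conn, hC'anti, hwC, hwq, a', ha'C', ha'w⟩
  · exact Or.inl hgood
  · -- stop
    right
    refine ⟨m, p, by omega, ⟨hinj, hadj, hnon⟩, ?_⟩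
    have hsub : Finset.univ \ Nb G p m ⊆ D ∪ S := by
      intro v hv
      rw [Finset.mem_sdiff] at hv
      have hvNb := hv.2
      rcases hcov v with h | h | h
      · exact absurd h hvNb
      · refine Finset.mem_union_right _ ?_
        rw [hSdef]
        refine Finset.mem_filter.mpr ⟨h, ?_⟩
        intro hcon
        exact hvNb (mem_Nb.mpr ⟨m-1, by omega, by rw [← hqdef]; exact hcon⟩)
      · exact Finset.mem_union_left _ h
    calc (Finset.univ \ Nb G p m).card ≤ (D ∪ S).card := Finset.card_le_card hsub
      _ ≤ D.card + S.card := Finset.card_union_le _ _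
      _ ≤ 4 * t := by omega
  · -- recurse
    have hwadj : G.Adj q w := by
      rcases hwq with h | h
      · exact absurd h (hqC w hwC)
      · exact h
    set D' := D ∪ (S \ C') with hD'def
    have hdisj' : Disjoint D' C' := by
      rw [hD'def]
      refine Finset.disjoint_union_left.mpr ⟨?_, Finset.sdiff_disjoint⟩
      exact Finset.disjoint_of_subset_right (hC'S.trans hSC) hDdisj
    have hanti' : Anti G D' C' := by
      intro a ha b hb
      rw [hD'def, Finset.mem_union] at ha
      rcases ha with ha | ha
      · exact hD a ha b (hSC (hC'S hb))
      · rw [Finset.mem_sdiff] at ha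
        exact hC'anti a ha.1 ha.2 b hb
    by_cases hD'card : t ≤ D'.card
    · refine Or.inl ⟨D', C', hdisj', hD'card, hC'card, hanti'⟩
    · -- build new path
      push_neg at hD'card
      set p' : ℕ → V := fun i => if i = m then w else p i with hp'def
      have hp'lt : ∀ i, i < m → p' i = p i := fun i hi => if_neg (by omega)
      have hp'm : p' m = w := if_pos rfl
      have hwC' : w ∉ C' := by
        intro h
        have := hC'S h
        rw [hSdef, Finset.mem_filter] at this
        exact this.2 (Or.inr hwadj)
      have hC'C : C' ⊆ C := hC'S.trans hSC
      have hpath' : IsIndPath G p' (m+1) := by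
        refine ⟨?_, ?_, ?_⟩
        · intro i hi j hj heq
          rcases Nat.lt_or_ge i m with hi' | hi' <;> rcases Nat.lt_or_ge j m with hj' | hj'
          · rw [hp'lt i hi', hp'lt j hj'] at heq; exact hinj i hi' j hj' heq
          · have hjm : j = m := by omega
            rw [hp'lt i hi', hjm, hp'm] at heq
            exact absurd heq.symm (hCP w hwC i hi')
          · have him : i = m := by omega
            rw [hp'lt j hj', him, hp'm] at heq
            exact absurd heq (hCP w hwC j hj')
          · omega
        · intro i hi
          rcases Nat.lt_or_ge (i+1) m with hi' | hi'
          · rw [hp'lt i (by omega), hp'lt (i+1) hi']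
            exact hadj i hi'
          · have him : i + 1 = m := by omega
            have h2 : p' (i+1) = w := by rw [him]; exact hp'm
            have h3 : p i = q := by rw [hqdef]; congr 1; omega
            rw [hp'lt i (by omega), h2, h3]
            exact hwadj
        · intro i j hj hij
          rcases Nat.lt_or_ge j m with hj' | hj'
          · rw [hp'lt i (by omega), hp'lt j hj']
            exact hnon i j hj' hij
          · have hjm : j = m := by omega
            rw [hp'lt i (by omega), hjm, hp'm]
            intro hcon
            exact hCPanti w hwC i (by omega) hcon.symm
      refine ih C' (m+1) p' D' (by
          have h1 : S.card < C.card := Finset.card_lt_card ⟨hSC, fun hCS => hw0S (hCS hw0C)⟩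
          have h2 : C'.card ≤ S.card := Finset.card_le_card hC'S
          omega)
        (by omega) hpath' ?_ ?_ ?_ hC'conn ?_ hanti' hdisj' (by omega)
      · -- hCP'
        intro x hx i hi
        rcases Nat.lt_or_ge i m with hi' | hi'
        · rw [hp'lt i hi']
          exact hCP x (hC'C hx) i hi'
        · have : i = m := by omega
          rw [this, hp'm]
          intro hcon
          exact hwC' (hcon ▸ hx)
      · -- hCPanti'
        intro x hx i hi
        rcases Nat.lt_or_ge (i+1) m with hi' | hi'
        · rw [hp'lt i (by omega)]
          exact hCPanti x (hC'C hx) i hi'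
        · have him : i = m - 1 := by omega
          rw [hp'lt i (by omega), him, ← hqdef]
          have := hC'S hx
          rw [hSdef, Finset.mem_filter] at this
          intro hcon
          exact this.2 (Or.inr hcon.symm)
      · -- hlast'
        refine ⟨a', ha'C', ?_⟩
        have : m + 1 - 1 = m := by omega
        rw [this, hp'm]
        exact ha'w.symm
      · -- cover
        intro v
        rcases hcov v with h | h | h
        · left
          obtain ⟨i, hi, hcond⟩ := mem_Nb.mp h
          exact mem_Nb.mpr ⟨i, by omega, by rw [hp'lt i hi]; exact hcond⟩
        · by_cases hvq : v = q ∨ G.Adj q v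
          · left
            exact mem_Nb.mpr ⟨m-1, by omega, by rw [hp'lt (m-1) (by omega), ← hqdef]; exact hvq⟩
          · have hvS : v ∈ S := by
              rw [hSdef]; exact Finset.mem_filter.mpr ⟨h, hvq⟩
            by_cases hvC' : v ∈ C'
            · exact Or.inr (Or.inl hvC')
            · right; right
              rw [hD'def, Finset.mem_union]
              exact Or.inr (Finset.mem_sdiff.mpr ⟨hvS, hvC'⟩)
        · right; right
          rw [hD'def, Finset.mem_union]
          exact Or.inl h

end Part2
section Part3

variable {V : Type} [Fintype V] [DecidableEq V] {G : SimpleGraph V}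

lemma reachable_rch {a b : V} (h : G.Reachable a b) : Rch G Finset.univ a b := by
  obtain ⟨wlk⟩ := h
  induction wlk with
  | nil => exact Rch.refl _ (Finset.mem_univ _)
  | cons hadj _ ih =>
      exact Rch.trans' (Rch.tail (Rch.refl _ (Finset.mem_univ _)) hadj (Finset.mem_univ _)) ih

lemma buildPath (t : ℕ) (ht : 1 ≤ t) (hconn : G.Connected) (hV : Nonempty V) :
    GoodPair G t ∨ ∃ (m : ℕ) (p : ℕ → V), 1 ≤ m ∧ IsIndPath G p m ∧
      (Finset.univ \ Nb G p m).card ≤ 4 * t := by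
  classical
  obtain ⟨p1⟩ := hV
  have hRuniv : ∀ a ∈ (Finset.univ : Finset V), ∀ b ∈ (Finset.univ : Finset V),
      Rch G Finset.univ a b := fun a _ b _ => reachable_rch (hconn a b)
  have hstep := stepCore t ht Finset.univ p1 hRuniv ⟨p1, Finset.mem_univ _, Or.inl rfl⟩
  set S := Finset.univ.filter (fun x => ¬(x = p1 ∨ G.Adj p1 x)) with hSdef
  rcases hstep with hgood | hS3 | ⟨C', w, hC'S, hC'card, hC'conn, hC'anti, _, hwq, a', ha'C', ha'w⟩
  · exact Or.inl hgood
  · right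
    refine ⟨1, fun _ => p1, le_rfl, ⟨?_, ?_, ?_⟩, ?_⟩
    · intro i hi j hj _; omega
    · intro i hi; omega
    · intro i j hj hij; omega
    · refine le_trans (le_trans (Finset.card_le_card ?_) hS3) (by omega)
      intro v hv
      rw [Finset.mem_sdiff] at hv
      rw [hSdef]
      refine Finset.mem_filter.mpr ⟨Finset.mem_univ _, ?_⟩
      intro hcon
      exact hv.2 (mem_Nb.mpr ⟨0, by omega, hcon⟩)
  · have hwadj : G.Adj p1 w := by
      rcases hwq with h | h
      · exfalso
        subst h
        have := hC'S ha'C'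
        rw [hSdef, Finset.mem_filter] at this
        exact this.2 (Or.inr ha'w.symm)
      · exact h
    set D' := S \ C' with hD'def
    have hanti' : Anti G D' C' := by
      intro a ha b hb
      rw [hD'def, Finset.mem_sdiff] at ha
      exact hC'anti a ha.1 ha.2 b hb
    by_cases hD'card : t ≤ D'.card
    · exact Or.inl ⟨D', C', Finset.sdiff_disjoint, hD'card, hC'card, hanti'⟩
    · push_neg at hD'card
      set p : ℕ → V := fun i => if i = 0 then p1 else w with hpdef
      have hp0 : p 0 = p1 := rfl
      have hp1 : p 1 = w := rfl
      have hxS : ∀ x ∈ C', ¬(x = p1 ∨ G.Adj p1 x) := by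
        intro x hx
        have := hC'S hx
        rw [hSdef, Finset.mem_filter] at this
        exact this.2
      have hwS : w ∉ S := by
        rw [hSdef, Finset.mem_filter]
        intro h
        exact h.2 (Or.inr hwadj)
      refine loopLemma t ht C'.card C' 2 p D' le_rfl le_rfl ⟨?_, ?_, ?_⟩ ?_ ?_ ?_ hC'conn ?_
        hanti' Finset.sdiff_disjoint (by omega)
      · intro i hi j hj heq
        interval_cases i <;> interval_cases j
        · rfl
        · exact absurd heq hwadj.ne
        · exact absurd heq.symm hwadj.ne
        · rfl
      · intro i hi
        have : i = 0 := by omega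
        subst this
        rw [hp0, hp1]
        exact hwadj
      · intro i j hj hij; omega
      · intro x hx i hi
        interval_cases i
        · rw [hp0]; intro hcon; exact hxS x hx (Or.inl hcon)
        · rw [hp1]; intro hcon; subst hcon; exact hwS (hC'S hx)
      · intro x hx i hi
        have : i = 0 := by omega
        subst this
        rw [hp0]
        intro hcon
        exact hxS x hx (Or.inr hcon.symm)
      · exact ⟨a', ha'C', by rw [(by norm_num : 2 - 1 = 1), hp1]; exact ha'w.symm⟩
      · intro v
        by_cases hv1 : v = p1 ∨ G.Adj p1 v
        · exact Or.inl (mem_Nb.mpr ⟨0, by omega, by rw [hp0]; exact hv1⟩)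
        · have hvS : v ∈ S := by
            rw [hSdef]; exact Finset.mem_filter.mpr ⟨Finset.mem_univ _, hv1⟩
          by_cases hvC' : v ∈ C'
          · exact Or.inr (Or.inl hvC')
          · exact Or.inr (Or.inr (by rw [hD'def]; exact Finset.mem_sdiff.mpr ⟨hvS, hvC'⟩))

end Part3
section Part4

variable {V : Type} [Fintype V] [DecidableEq V] {G : SimpleGraph V}

lemma windowLemma (k t d n : ℕ) (hk : 4 ≤ k) (hn : Fintype.card V = n)
    (hholes : ∀ l, k ≤ l → IsEmpty (SimpleGraph.cycleGraph l ↪g G))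
    (hdeg : ∀ v : V, G.degree v ≤ d)
    (m : ℕ) (p : ℕ → V) (hm : 1 ≤ m) (hpath : IsIndPath G p m)
    (hZ : (Finset.univ \ Nb G p m).card ≤ 4 * t)
    (ht : 1 ≤ t)
    (hnum : 10 * t + 2 * (k * (d + 1)) + 2 ≤ n) :
    GoodPair G t := by
  classical
  obtain ⟨hinj, hadjP, hnon⟩ := hpath
  have hNbd : ∀ u : V, (insert u (G.neighborFinset u)).card ≤ d + 1 := by
    intro u
    refine le_trans (Finset.card_insert_le _ _) ?_
    have h := hdeg u
    rw [SimpleGraph.card_neighborFinset_eq_degree]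
    omega
  set F : ℕ → Finset V := fun j => Nb G p (min (j+1) m) with hFdef
  have hFmono : ∀ i j : ℕ, i ≤ j → F i ⊆ F j := by
    intro i j hij v hv
    rw [hFdef] at hv ⊢
    obtain ⟨i', hi', hcond⟩ := mem_Nb.mp hv
    exact mem_Nb.mpr ⟨i', by omega, hcond⟩
  have hFstep : ∀ j : ℕ, (F (j+1)).card ≤ (F j).card + (d+1) := by
    intro j
    have hsub : F (j+1) ⊆ F j ∪ insert (p (j+1)) (G.neighborFinset (p (j+1))) := by
      intro v hv
      obtain ⟨i, hi, hcond⟩ := mem_Nb.mp hv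
      by_cases hcase : i < min (j+1) m
      · exact Finset.mem_union_left _ (mem_Nb.mpr ⟨i, hcase, hcond⟩)
      · have hieq : i = j + 1 := by omega
        subst hieq
        refine Finset.mem_union_right _ ?_
        rcases hcond with h | h
        · rw [h]; exact Finset.mem_insert_self _ _
        · exact Finset.mem_insert_of_mem (SimpleGraph.mem_neighborFinset _ _ _ |>.mpr h)
    calc (F (j+1)).card ≤ _ := Finset.card_le_card hsub
      _ ≤ (F j).card + (insert (p (j+1)) (G.neighborFinset (p (j+1)))).card :=
          Finset.card_union_le _ _
      _ ≤ (F j).card + (d+1) := by have := hNbd (p (j+1)); omega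
  have hFsteps : ∀ j s : ℕ, (F (j+s)).card ≤ (F j).card + s*(d+1) := by
    intro j s
    induction s with
    | zero => simp
    | succ s ihs =>
        have h1 := hFstep (j+s)
        have : j + (s+1) = (j+s) + 1 := by omega
        rw [this]
        calc (F ((j+s)+1)).card ≤ (F (j+s)).card + (d+1) := hFstep _
          _ ≤ (F j).card + s*(d+1) + (d+1) := by omega
          _ = (F j).card + (s+1)*(d+1) := by ring
  have hNbcard : n - 4 * t ≤ (Nb G p m).card := by
    have h1 : (Finset.univ \ Nb G p m).card = n - (Nb G p m).card := by
      rw [Finset.card_sdiff_of_subset (Finset.subset_univ _), Finset.card_univ, hn]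
    have h2 : (Nb G p m).card ≤ n := by
      rw [← hn, ← Finset.card_univ]
      exact Finset.card_le_card (Finset.subset_univ _)
    omega
  have hex : ∃ j, n ≤ 2 * (F j).card := by
    refine ⟨m - 1, ?_⟩
    have : min (m-1+1) m = m := by omega
    rw [hFdef]
    simp only
    rw [this]
    omega
  set js := Nat.find hex with hjsdef
  have hjs : n ≤ 2 * (F js).card := Nat.find_spec hex
  have hjsmin : ∀ j, j < js → ¬ (n ≤ 2 * (F j).card) := fun j hj => Nat.find_min hex hj
  have hjs1 : 1 ≤ js := by
    rcases Nat.eq_zero_or_pos js with h0 | h1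
    · exfalso
      have hF0 : F 0 ⊆ insert (p 0) (G.neighborFinset (p 0)) := by
        intro v hv
        obtain ⟨i, hi, hcond⟩ := mem_Nb.mp hv
        have : i = 0 := by omega
        subst this
        rcases hcond with h | h
        · rw [h]; exact Finset.mem_insert_self _ _
        · exact Finset.mem_insert_of_mem (SimpleGraph.mem_neighborFinset _ _ _ |>.mpr h)
      have hcard0 : (F 0).card ≤ d + 1 := le_trans (Finset.card_le_card hF0) (hNbd _)
      have := h0 ▸ hjs
      have hkd : k * (d+1) ≥ 4 * (d+1) := Nat.mul_le_mul_right _ hk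
      omega
    · exact h1
  have hjspred : 2 * (F (js - 1)).card < n := by
    have := hjsmin (js - 1) (by omega)
    omega
  -- the buffer W
  set W : Finset V := Finset.univ.filter
      (fun v => ∃ i, js + 1 ≤ i ∧ i ≤ js + (k-2) ∧ i < m ∧ (v = p i ∨ G.Adj (p i) v)) with hWdef
  have hWcard : W.card ≤ (k-2) * (d+1) := by
    have hsub : W ⊆ (Finset.Icc (js+1) (js+(k-2))).biUnion
        (fun i => insert (p i) (G.neighborFinset (p i))) := by
      intro v hv
      rw [hWdef, Finset.mem_filter] at hv
      obtain ⟨_, i, h1, h2, h3, hcond⟩ := hv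
      refine Finset.mem_biUnion.mpr ⟨i, Finset.mem_Icc.mpr ⟨h1, h2⟩, ?_⟩
      rcases hcond with h | h
      · rw [h]; exact Finset.mem_insert_self _ _
      · exact Finset.mem_insert_of_mem (SimpleGraph.mem_neighborFinset _ _ _ |>.mpr h)
    refine le_trans (Finset.card_le_card hsub) ?_
    refine le_trans (Finset.card_biUnion_le) ?_
    refine le_trans (Finset.sum_le_card_nsmul _ _ (d+1) (fun i _ => hNbd (p i))) ?_
    have : (Finset.Icc (js+1) (js+(k-2))).card = k - 2 := by
      rw [Nat.card_Icc]
      omega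
    rw [this]
    simp [Nat.smul_one_eq_cast]
  have hWsub : W ⊆ F (js + (k-2)) := by
    intro v hv
    rw [hWdef, Finset.mem_filter] at hv
    obtain ⟨_, i, h1, h2, h3, hcond⟩ := hv
    exact mem_Nb.mpr ⟨i, by omega, hcond⟩
  set X := F js \ W with hXdef
  set Y := Nb G p m \ F (js + (k-2)) with hYdef
  have hkd2 : (k-2) * (d+1) ≤ k * (d+1) := Nat.mul_le_mul_right _ (by omega)
  have hkd1 : (k-1) * (d+1) ≤ k * (d+1) := Nat.mul_le_mul_right _ (by omega)
  have hXcard : t ≤ X.card := by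
    have h1 : (F js).card ≤ X.card + W.card := by
      refine le_trans (Finset.card_le_card (fun v hv => ?_)) (Finset.card_union_le X W)
      by_cases hw : v ∈ W
      · exact Finset.mem_union_right _ hw
      · exact Finset.mem_union_left _ (Finset.mem_sdiff.mpr ⟨hv, hw⟩)
    omega
  have hYcard : t ≤ Y.card := by
    have h1 : (Nb G p m).card ≤ Y.card + (F (js + (k-2))).card := by
      refine le_trans (Finset.card_le_card (fun v hv => ?_)) (Finset.card_union_le _ _)
      by_cases hw : v ∈ F (js + (k-2))
      · exact Finset.mem_union_right _ hw
      · exact Finset.mem_union_left _ (Finset.mem_sdiff.mpr ⟨hv, hw⟩)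
    have h2 : (F (js + (k-2))).card ≤ (F (js-1)).card + (k-1)*(d+1) := by
      have heq : js + (k-2) = (js - 1) + (k-1) := by omega
      rw [heq]
      exact hFsteps (js-1) (k-1)
    omega
  have hdisjXY : Disjoint X Y := by
    rw [Finset.disjoint_left]
    intro v hvX hvY
    rw [hXdef, Finset.mem_sdiff] at hvX
    rw [hYdef, Finset.mem_sdiff] at hvY
    exact hvY.2 (hFmono js (js + (k-2)) (by omega) hvX.1)
  refine ⟨X, Y, hdisjXY, hXcard, hYcard, ?_⟩
  -- anticompleteness
  intro x hx y hy hadj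
  rw [hXdef, Finset.mem_sdiff] at hx
  rw [hYdef, Finset.mem_sdiff] at hy
  set Ix := (Finset.range m).filter (fun i => x = p i ∨ G.Adj (p i) x) with hIxdef
  set Iy := (Finset.range m).filter (fun i => y = p i ∨ G.Adj (p i) y) with hIydef
  have hIxmem : ∀ i, i ∈ Ix ↔ (i < m ∧ (x = p i ∨ G.Adj (p i) x)) := by
    intro i; rw [hIxdef]; simp [Finset.mem_filter]
  have hIymem : ∀ i, i ∈ Iy ↔ (i < m ∧ (y = p i ∨ G.Adj (p i) y)) := by
    intro i; rw [hIydef]; simp [Finset.mem_filter]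
  have hIxne : Ix.Nonempty := by
    obtain ⟨i, hi, hcond⟩ := mem_Nb.mp hx.1
    exact ⟨i, (hIxmem i).mpr ⟨by omega, hcond⟩⟩
  have hIyne : Iy.Nonempty := by
    obtain ⟨i, hi, hcond⟩ := mem_Nb.mp hy.1
    exact ⟨i, (hIymem i).mpr ⟨hi, hcond⟩⟩
  have hIxlow : ∃ i ∈ Ix, i ≤ js := by
    obtain ⟨i, hi, hcond⟩ := mem_Nb.mp hx.1
    exact ⟨i, (hIxmem i).mpr ⟨by omega, hcond⟩, by omega⟩
  have hxWgap : ∀ i ∈ Ix, i ≤ js ∨ js + (k-1) ≤ i := by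
    intro i hi
    rw [hIxmem] at hi
    by_contra hcon
    push_neg at hcon
    exact hx.2 (by
      rw [hWdef, Finset.mem_filter]
      exact ⟨Finset.mem_univ _, i, by omega, by omega, hi.1, hi.2⟩)
  have hyhigh : ∀ i ∈ Iy, js + (k-1) ≤ i := by
    intro i hi
    rw [hIymem] at hi
    by_contra hcon
    push_neg at hcon
    exact hy.2 (mem_Nb.mpr ⟨i, by omega, hi.2⟩)
  -- claim: all of Ix is ≤ js
  have claimx : ∀ i ∈ Ix, i ≤ js := by
    intro i0 hi0
    by_contra hgt
    push_neg at hgt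
    have hi0B : js + (k-1) ≤ i0 := by
      rcases hxWgap i0 hi0 with h | h
      · omega
      · exact h
    set A := Ix.filter (fun i => i ≤ js) with hAdef
    set B := Ix.filter (fun i => js + (k-1) ≤ i) with hBdef
    have hAne : A.Nonempty := by
      obtain ⟨i, hi, hle⟩ := hIxlow
      exact ⟨i, by rw [hAdef]; exact Finset.mem_filter.mpr ⟨hi, hle⟩⟩
    have hBne : B.Nonempty := ⟨i0, by rw [hBdef]; exact Finset.mem_filter.mpr ⟨hi0, hi0B⟩⟩
    set a1 := A.max' hAne with ha1def
    set b1 := B.min' hBne with hb1def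
    have ha1A : a1 ∈ A := A.max'_mem hAne
    have hb1B : b1 ∈ B := B.min'_mem hBne
    have ha1Ix : a1 ∈ Ix := (Finset.mem_filter.mp ha1A).1
    have hb1Ix : b1 ∈ Ix := (Finset.mem_filter.mp hb1B).1
    have ha1js : a1 ≤ js := (Finset.mem_filter.mp ha1A).2
    have hb1js : js + (k-1) ≤ b1 := (Finset.mem_filter.mp hb1B).2
    have hb1m : b1 < m := ((hIxmem b1).mp hb1Ix).1
    have hgap : ∀ i ∈ Ix, i ≤ a1 ∨ b1 ≤ i := by
      intro i hi
      rcases hxWgap i hi with h | h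
      · exact Or.inl (A.le_max' i (by rw [hAdef]; exact Finset.mem_filter.mpr ⟨hi, h⟩))
      · exact Or.inr (B.min'_le i (by rw [hBdef]; exact Finset.mem_filter.mpr ⟨hi, h⟩))
    by_cases hxon : ∃ c, c < m ∧ x = p c
    · obtain ⟨c, hcm, hxc⟩ := hxon
      have hclose : ∀ i ∈ Ix, c ≤ i + 1 ∧ i ≤ c + 1 := by
        intro i hi
        rw [hIxmem] at hi
        rcases hi.2 with h | h
        · have : i = c := hinj i hi.1 c hcm (by rw [← h, hxc])
          omega
        · rw [hxc] at h
          constructor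
          · by_contra hcon
            exact hnon i c hcm (by omega) h
          · by_contra hcon
            exact hnon c i hi.1 (by omega) h.symm
      have h1 := hclose a1 ha1Ix
      have h2 := hclose b1 hb1Ix
      omega
    · push_neg at hxon
      -- build a hole x - p a1 - ... - p b1 - x
      refine holeBuilder G k hk hholes (b1 - a1 + 2) (by omega)
        (fun s => if s = b1 - a1 + 1 then x else p (a1 + s)) ?_ ?_ ?_ ?_
      · intro i hiL j hjL heq
        by_cases hix : i = b1 - a1 + 1 <;> by_cases hjx : j = b1 - a1 + 1
        · omega
        · rw [if_pos hix, if_neg hjx] at heq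
          exact absurd heq (hxon (a1+j) (by omega))
        · rw [if_neg hix, if_pos hjx] at heq
          exact absurd heq.symm (hxon (a1+i) (by omega))
        · rw [if_neg hix, if_neg hjx] at heq
          have := hinj (a1+i) (by omega) (a1+j) (by omega) heq
          omega
      · intro i hiL
        by_cases hix : i + 1 = b1 - a1 + 1
        · rw [if_neg (by omega), if_pos hix]
          have : a1 + i = b1 := by omega
          rw [this]
          rcases ((hIxmem b1).mp hb1Ix).2 with h | h
          · exact absurd h (hxon b1 hb1m)
          · exact h
        · rw [if_neg (by omega), if_neg hix]
          exact hadjP (a1+i) (by omega)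
      · rw [if_pos (by omega), if_neg (by omega)]
        have : a1 + 0 = a1 := by omega
        rw [this]
        rcases ((hIxmem a1).mp ha1Ix).2 with h | h
        · exact absurd h (hxon a1 (by omega))
        · exact h.symm
      · intro i j hiL hjL hij hne
        by_cases hjx : j = b1 - a1 + 1
        · rw [if_neg (by omega), if_pos hjx]
          intro hcon
          have hmem : a1 + i ∈ Ix := (hIxmem (a1+i)).mpr ⟨by omega, Or.inr hcon⟩
          rcases hgap _ hmem with h | h
          · omega
          · omega
        · rw [if_neg (by omega), if_neg hjx]
          exact hnon (a1+i) (a1+j) (by omega) (by omega)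
  -- now use the edge x ~ y
  by_cases hyon : ∃ c, c < m ∧ y = p c
  · obtain ⟨c, hcm, hyc⟩ := hyon
    have hcIy : c ∈ Iy := (hIymem c).mpr ⟨hcm, Or.inl hyc⟩
    have hcIx : c ∈ Ix := (hIxmem c).mpr ⟨hcm, Or.inr (by rw [← hyc]; exact hadj.symm)⟩
    have := hyhigh c hcIy
    have := claimx c hcIx
    omega
  push_neg at hyon
  by_cases hxon : ∃ c, c < m ∧ x = p c
  · obtain ⟨c, hcm, hxc⟩ := hxon
    have hcIx : c ∈ Ix := (hIxmem c).mpr ⟨hcm, Or.inl hxc⟩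
    have hcIy : c ∈ Iy := (hIymem c).mpr ⟨hcm, Or.inr (by rw [← hxc]; exact hadj)⟩
    have := hyhigh c hcIy
    have := claimx c hcIx
    omega
  push_neg at hxon
  set a1 := Ix.max' hIxne with ha1def
  set b1 := Iy.min' hIyne with hb1def
  have ha1Ix : a1 ∈ Ix := Ix.max'_mem hIxne
  have hb1Iy : b1 ∈ Iy := Iy.min'_mem hIyne
  have ha1js : a1 ≤ js := claimx a1 ha1Ix
  have hb1js : js + (k-1) ≤ b1 := hyhigh b1 hb1Iy
  have hb1m : b1 < m := ((hIymem b1).mp hb1Iy).1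
  have ha1m : a1 < m := ((hIxmem a1).mp ha1Ix).1
  have ha1adj : G.Adj (p a1) x := by
    rcases ((hIxmem a1).mp ha1Ix).2 with h | h
    · exact absurd h (hxon a1 ha1m)
    · exact h
  have hb1adj : G.Adj (p b1) y := by
    rcases ((hIymem b1).mp hb1Iy).2 with h | h
    · exact absurd h (hyon b1 hb1m)
    · exact h
  have hIxmax : ∀ i ∈ Ix, i ≤ a1 := fun i hi => Ix.le_max' i hi
  have hIymin : ∀ i ∈ Iy, b1 ≤ i := fun i hi => Iy.min'_le i hi
  -- hole: x - p a1 - ... - p b1 - y - x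
  refine holeBuilder G k hk hholes (b1 - a1 + 3) (by omega)
    (fun s => if s = 0 then x else if s = b1 - a1 + 2 then y else p (a1 + s - 1)) ?_ ?_ ?_ ?_
  · intro i hiL j hjL heq
    by_cases hi0 : i = 0 <;> by_cases hj0 : j = 0
    · omega
    · rw [if_pos hi0, if_neg hj0] at heq
      by_cases hjy : j = b1 - a1 + 2
      · rw [if_pos hjy] at heq
        exact absurd heq hadj.ne
      · rw [if_neg hjy] at heq
        exact absurd heq (hxon (a1+j-1) (by omega))
    · rw [if_neg hi0, if_pos hj0] at heq
      by_cases hiy : i = b1 - a1 + 2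
      · rw [if_pos hiy] at heq
        exact absurd heq.symm hadj.ne
      · rw [if_neg hiy] at heq
        exact absurd heq.symm (hxon (a1+i-1) (by omega))
    · rw [if_neg hi0, if_neg hj0] at heq
      by_cases hiy : i = b1 - a1 + 2 <;> by_cases hjy : j = b1 - a1 + 2
      · omega
      · rw [if_pos hiy, if_neg hjy] at heq
        exact absurd heq (hyon (a1+j-1) (by omega))
      · rw [if_neg hiy, if_pos hjy] at heq
        exact absurd heq.symm (hyon (a1+i-1) (by omega))
      · rw [if_neg hiy, if_neg hjy] at heq
        have := hinj (a1+i-1) (by omega) (a1+j-1) (by omega) heq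
        omega
  · intro i hiL
    by_cases hi0 : i = 0
    · rw [if_pos hi0, if_neg (by omega), if_neg (by omega)]
      have : a1 + 1 - 1 = a1 := by omega
      rw [(by omega : i + 1 = 1), this]
      exact ha1adj.symm
    · by_cases hiy : i + 1 = b1 - a1 + 2
      · rw [if_neg hi0, if_neg (by omega), if_neg (by omega), if_pos hiy]
        have : a1 + i - 1 = b1 := by omega
        rw [this]
        exact hb1adj
      · rw [if_neg hi0, if_neg (by omega), if_neg (by omega), if_neg hiy]
        have h1 : a1 + (i+1) - 1 = (a1 + i - 1) + 1 := by omega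
        rw [h1]
        exact hadjP (a1+i-1) (by omega)
  · rw [if_neg (by omega), if_pos (by omega), if_pos rfl]
    exact hadj.symm
  · intro i j hiL hjL hij hne
    by_cases hi0 : i = 0
    · subst hi0
      have hjy : j ≠ b1 - a1 + 2 := by
        intro h
        exact hne ⟨rfl, by omega⟩
      rw [if_pos rfl, if_neg (by omega), if_neg hjy]
      intro hcon
      have hmem : a1 + j - 1 ∈ Ix := (hIxmem (a1+j-1)).mpr ⟨by omega, Or.inr hcon.symm⟩
      have := hIxmax _ hmem
      omega
    · by_cases hjy : j = b1 - a1 + 2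
      · rw [if_neg hi0, if_neg (by omega), if_neg (by omega), if_pos hjy]
        intro hcon
        have hmem : a1 + i - 1 ∈ Iy := (hIymem (a1+i-1)).mpr ⟨by omega, Or.inr hcon⟩
        have := hIymin _ hmem
        omega
      · rw [if_neg hi0, if_neg (by omega), if_neg (by omega), if_neg hjy]
        exact hnon (a1+i-1) (a1+j-1) (by omega) (by omega)

end Part4



/-- For every `k ≥ 4` there are `ε > 0`, `c > 0` and `N` such that
every connected graph `G` on `n ≥ N` vertices with no induced cycle of length at
least `k` and maximum degree at most `εn` contains two disjoint vertex sets `X`, `Y`,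
each of size at least `cn`, with no edge between them. -/
theorem stmt19 (k : ℕ) (hk : 4 ≤ k) :
    ∃ ε : ℝ, 0 < ε ∧ ∃ c : ℝ, 0 < c ∧ ∃ N : ℕ,
      ∀ (V : Type) [Fintype V] [DecidableEq V] (G : SimpleGraph V)
        [DecidableRel G.Adj] (n : ℕ), Fintype.card V = n → N ≤ n →
        G.Connected →
        (∀ l, k ≤ l → IsEmpty (SimpleGraph.cycleGraph l ↪g G)) →
        (∀ v : V, (G.degree v : ℝ) ≤ ε * n) →
        ∃ X Y : Finset V, Disjoint X Y ∧
          c * n ≤ (X.card : ℝ) ∧ c * n ≤ (Y.card : ℝ) ∧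
          ∀ x ∈ X, ∀ y ∈ Y, ¬ G.Adj x y := by
  have hk4R : (4:ℝ) ≤ (k:ℝ) := by exact_mod_cast hk
  refine ⟨1/(100*(k:ℝ)*k), by positivity, 1/(200*(k:ℝ)), by positivity, 100000*k, ?_⟩
  intro V _ _ G _ n hcard hN hconn hholes hdeg
  have hn0 : 0 < n := by omega
  haveI hne : Nonempty V := Fintype.card_pos_iff.mp (by rw [hcard]; omega)
  set d := n / (100*k*k) with hd
  set t := n / (100*k) + 1 with htdef
  have hkk_pos : 0 < 100*k*k := by positivity
  have hdegnat : ∀ v : V, G.degree v ≤ d := by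
    intro v
    have h := hdeg v
    have hkpos2 : (0:ℝ) < 100*(k:ℝ)*k := by positivity
    have hrw : (1/(100*(k:ℝ)*k))*n = (n:ℝ)/(100*(k:ℝ)*k) := by ring
    rw [hrw] at h
    have h2 : (G.degree v : ℝ) * (100*(k:ℝ)*k) ≤ n := (le_div_iff₀ hkpos2).mp h
    have h3 : G.degree v * (100*k*k) ≤ n := by exact_mod_cast h2
    rw [hd]
    exact (Nat.le_div_iff_mul_le hkk_pos).mpr h3
  have h400d : 400*(k*d) ≤ n := by
    calc 400*(k*d) ≤ (100*k)*(k*d) := Nat.mul_le_mul_right _ (by omega)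
      _ = d*(100*k*k) := by ring
      _ ≤ n := by rw [hd]; exact Nat.div_mul_le_self _ _
  have h400a : 400*(n/(100*k)) ≤ n := by
    calc 400*(n/(100*k)) ≤ (100*k)*(n/(100*k)) := Nat.mul_le_mul_right _ (by omega)
      _ = (n/(100*k))*(100*k) := by ring
      _ ≤ n := Nat.div_mul_le_self _ _
  have hnum : 10*t + 2*(k*(d+1)) + 2 ≤ n := by
    have e1 : k*(d+1) = k*d + k := by ring
    rw [htdef, e1]
    revert h400d h400a
    generalize k*d = kd
    generalize n/(100*k) = a
    intro hB hA
    omega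
  have hnt : n ≤ 200*k*t := by
    have h := Nat.div_add_mod n (100*k)
    have h2 : n % (100*k) < 100*k := Nat.mod_lt _ (by omega)
    have e2 : 200*k*t = (100*k)*(n/(100*k)) + (100*k)*(n/(100*k)) + 200*k := by
      rw [htdef]; ring
    revert h e2
    generalize (100*k)*(n/(100*k)) = u
    generalize 200*k*t = w
    intro h e2
    omega
  have hgood : GoodPair G t := by
    rcases buildPath t (by omega) hconn hne with h | ⟨m, p, hm, hpath, hZ⟩
    · exact h
    · refine windowLemma k t d n hk hcard hholes ?_ m p hm hpath hZ (by omega) hnum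
      intro v
      have h := hdegnat v
      convert h using 2
  obtain ⟨X, Y, hdisj, hX, hY, hanti⟩ := hgood
  have hkpos : (0:ℝ) < 200*(k:ℝ) := by positivity
  have hcn : (1/(200*(k:ℝ)))*n ≤ (t:ℝ) := by
    rw [one_div, inv_mul_le_iff₀ hkpos]
    exact_mod_cast hnt
  refine ⟨X, Y, hdisj, ?_, ?_, hanti⟩
  · exact le_trans hcn (by exact_mod_cast hX)
  · exact le_trans hcn (by exact_mod_cast hY)
end
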